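/- arXiv:2306.16803 — 4 statements merged into one kernel-verified Lean document; each statement's English description precedes it below -/
import Mathlib

section
/- Let A_0 and X be random variables on a finite probability space with P(A_0 = a) = π(a) > 0 for all a in a finite set A, and let R = g(X) be a real-valued deterministic function of X. Define w_X(a, x) = P(A_0 = a | X = x)/π(a) - 1 and w_R(a, r) = P(A_0 = a | R = r)/π(a) - 1. Then for the estimators Ĝ_X = Σ_a c(a) w_X(a, X) g(X) and Ĝ_R = Σ_a c(a) w_R(a, R) g(X), where c : A → ℝ^n is any fixed vector-valued function with Σ_a c(a) = 0, we have E[Ĝ_X | R] = Ĝ_R almost surely, and consequently Cov(Ĝ_R) ⪯ Cov(Ĝ_X). -/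
open Finset

attribute [local instance] Classical.propDecidable

noncomputable section

/-- Expectation on a finite weighted space. -/
def Ex {Ω : Type*} [Fintype Ω] (p : Ω → ℝ) (f : Ω → ℝ) : ℝ := ∑ ω, p ω * f ω

/-- Probability of an event. -/
def Pr {Ω : Type*} [Fintype Ω] (p : Ω → ℝ) (φ : Ω → Prop) : ℝ :=
  ∑ ω ∈ Finset.univ.filter φ, p ω

/-- Conditional probability `P(φ | ψ)`. -/
def cPr {Ω : Type*} [Fintype Ω] (p : Ω → ℝ) (φ ψ : Ω → Prop) : ℝ :=
  Pr p (fun ω => φ ω ∧ ψ ω) / Pr p ψ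

/-- Conditional expectation `E[f | ψ]`. -/
def cEx {Ω : Type*} [Fintype Ω] (p : Ω → ℝ) (f : Ω → ℝ) (ψ : Ω → Prop) : ℝ :=
  (∑ ω ∈ Finset.univ.filter ψ, p ω * f ω) / Pr p ψ

/-- Covariance matrix `Cov(X) = E[(X - E[X])(X - E[X])ᵀ]`. -/
def covM {Ω : Type*} [Fintype Ω] (p : Ω → ℝ) {n : ℕ} (X : Ω → Fin n → ℝ) :
    Matrix (Fin n) (Fin n) ℝ :=
  Matrix.of fun i j =>
    Ex p fun ω => (X ω i - Ex p fun ω' => X ω' i) * (X ω j - Ex p fun ω' => X ω' j)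

/- ### Auxiliary lemmas -/

section Aux

variable {Ω : Type*} [Fintype Ω]

lemma Pr_pos' (p : Ω → ℝ) (hp : ∀ ω, 0 < p ω) (φ : Ω → Prop)
    (ω0 : Ω) (h : φ ω0) : 0 < Pr p φ :=
  Finset.sum_pos (fun ω _ => hp ω) ⟨ω0, by simp [h]⟩

/-- Bridging lemma: `Pr` as a sum over a filter with any decidability instance. -/
lemma Pr_eq' (p : Ω → ℝ) (φ : Ω → Prop) [DecidablePred φ] :
    Pr p φ = ∑ ω ∈ univ.filter φ, p ω := by
  rw [Pr]; exact Finset.sum_congr (by ext; simp) fun _ _ => rfl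

/-- Bridging lemma for the numerator of `cEx`. -/
lemma cEx_num (p : Ω → ℝ) (f : Ω → ℝ) (φ : Ω → Prop) [DecidablePred φ] :
    cEx p f φ * Pr p φ = if Pr p φ = 0 then 0 else ∑ ω ∈ univ.filter φ, p ω * f ω := by
  rw [cEx]
  by_cases h : Pr p φ = 0
  · simp [h]
  · rw [if_neg h, div_mul_cancel₀ _ h]
    exact Finset.sum_congr (by ext; simp) fun _ _ => rfl

lemma fiber_sum {χ : Type*} [Fintype χ] (p : Ω → ℝ) (X : Ω → χ) (g : χ → ℝ)
    (r : ℝ) (q : χ → ℝ) :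
    ∑ ω ∈ univ.filter (fun ω => g (X ω) = r), p ω * q (X ω)
      = ∑ x ∈ (univ.filter (fun ω => g (X ω) = r)).image X,
          Pr p (fun ω => X ω = x) * q x := by
  rw [← Finset.sum_fiberwise_of_maps_to (g := X)
    (fun ω hω => Finset.mem_image_of_mem X hω)]
  refine Finset.sum_congr rfl fun x hx => ?_
  obtain ⟨ω0, hω0, rfl⟩ := Finset.mem_image.mp hx
  have hg : g (X ω0) = r := by simpa using (Finset.mem_filter.mp hω0).2
  have hset : (univ.filter (fun ω => g (X ω) = r)).filter (fun ω => X ω = X ω0)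
      = univ.filter (fun ω => X ω = X ω0) := by
    ext ω
    simp only [Finset.mem_filter, Finset.mem_univ, true_and]
    exact ⟨fun h => h.2, fun h => ⟨by rw [h, hg], h⟩⟩
  rw [hset]
  calc ∑ ω ∈ univ.filter (fun ω => X ω = X ω0), p ω * q (X ω)
      = ∑ ω ∈ univ.filter (fun ω => X ω = X ω0), p ω * q (X ω0) := by
        refine Finset.sum_congr rfl fun ω hω => ?_
        have : X ω = X ω0 := by simpa using (Finset.mem_filter.mp hω).2
        rw [this]
    _ = (∑ ω ∈ univ.filter (fun ω => X ω = X ω0), p ω) * q (X ω0) :=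
        (Finset.sum_mul _ _ _).symm
    _ = Pr p (fun ω => X ω = X ω0) * q (X ω0) := by rw [Pr_eq']

lemma fiber_sum2 {χ : Type*} [Fintype χ] (p : Ω → ℝ) (X : Ω → χ) (g : χ → ℝ)
    (r : ℝ) (B : Ω → Prop) :
    ∑ x ∈ (univ.filter (fun ω => g (X ω) = r)).image X,
        Pr p (fun ω => B ω ∧ X ω = x)
      = Pr p (fun ω => B ω ∧ g (X ω) = r) := by
  calc ∑ x ∈ (univ.filter (fun ω => g (X ω) = r)).image X,
        Pr p (fun ω => B ω ∧ X ω = x)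
      = ∑ x ∈ (univ.filter (fun ω => g (X ω) = r)).image X,
          ∑ ω ∈ (univ.filter (fun ω => B ω ∧ g (X ω) = r)).filter (fun ω => X ω = x),
            p ω := by
        refine Finset.sum_congr rfl fun x hx => ?_
        obtain ⟨ω0, hω0, rfl⟩ := Finset.mem_image.mp hx
        have hg : g (X ω0) = r := by simpa using (Finset.mem_filter.mp hω0).2
        rw [Pr]
        apply Finset.sum_congr _ (fun _ _ => rfl)
        ext ω
        simp only [Finset.mem_filter, Finset.mem_univ, true_and]
        constructor
        · rintro ⟨hB, hX⟩; exact ⟨⟨hB, by rw [hX, hg]⟩, hX⟩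
        · rintro ⟨⟨hB, _⟩, hX⟩; exact ⟨hB, hX⟩
    _ = ∑ ω ∈ univ.filter (fun ω => B ω ∧ g (X ω) = r), p ω := by
        refine Finset.sum_fiberwise_of_maps_to (fun ω hω => ?_) p
        have h2 : g (X ω) = r := by
          simpa using ((Finset.mem_filter.mp hω).2).2
        refine Finset.mem_image_of_mem X ?_
        simp [h2]
    _ = Pr p (fun ω => B ω ∧ g (X ω) = r) := (Pr_eq' p _).symm

/-- The inner sum computation for STATEMENT 11, part 1. -/
lemma innerSum11 {α χ : Type*} [Fintype χ] (p : Ω → ℝ) (hp : ∀ ω, 0 < p ω)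
    (A0 : Ω → α) (X : Ω → χ) (g : χ → ℝ) (a : α) (pa : ℝ) (r : ℝ) :
    ∑ ω ∈ univ.filter (fun ω => g (X ω) = r),
        p ω * (cPr p (fun ω' => A0 ω' = a) (fun ω' => X ω' = X ω) / pa - 1)
      = Pr p (fun ω => A0 ω = a ∧ g (X ω) = r) / pa
          - Pr p (fun ω => g (X ω) = r) := by
  calc ∑ ω ∈ univ.filter (fun ω => g (X ω) = r),
        p ω * (cPr p (fun ω' => A0 ω' = a) (fun ω' => X ω' = X ω) / pa - 1)
      = ∑ x ∈ (univ.filter (fun ω => g (X ω) = r)).image X,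
          Pr p (fun ω => X ω = x)
            * (cPr p (fun ω' => A0 ω' = a) (fun ω' => X ω' = x) / pa - 1) :=
        fiber_sum p X g r
          (fun x => cPr p (fun ω' => A0 ω' = a) (fun ω' => X ω' = x) / pa - 1)
    _ = ∑ x ∈ (univ.filter (fun ω => g (X ω) = r)).image X,
          (Pr p (fun ω => A0 ω = a ∧ X ω = x) / pa - Pr p (fun ω => X ω = x)) := by
        refine Finset.sum_congr rfl fun x hx => ?_
        obtain ⟨ω0, hω0, rfl⟩ := Finset.mem_image.mp hx
        have hX : Pr p (fun ω => X ω = X ω0) ≠ 0 :=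
          (Pr_pos' p hp (fun ω => X ω = X ω0) ω0 rfl).ne'
        rw [cPr, mul_sub, mul_one]
        congr 1
        rw [div_div, mul_comm (Pr p fun ω => X ω = X ω0) pa, ← div_div,
          mul_comm (Pr p fun ω => X ω = X ω0), div_mul_cancel₀ _ hX]
    _ = (∑ x ∈ (univ.filter (fun ω => g (X ω) = r)).image X,
          Pr p (fun ω => A0 ω = a ∧ X ω = x)) / pa
        - ∑ x ∈ (univ.filter (fun ω => g (X ω) = r)).image X,
            Pr p (fun ω => X ω = x) := by
        rw [Finset.sum_sub_distrib, Finset.sum_div]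
    _ = Pr p (fun ω => A0 ω = a ∧ g (X ω) = r) / pa
          - Pr p (fun ω => g (X ω) = r) := by
        rw [fiber_sum2]
        congr 1
        have := fiber_sum p X g r (fun _ => 1)
        simp only [mul_one] at this
        rw [← this, Pr_eq']

/-- Orthogonality: fiberwise-constant functions are orthogonal to `f - E[f | fiber]`. -/
lemma orth (p : Ω → ℝ) (hp : ∀ ω, 0 < p ω) (Rf : Ω → ℝ) (f u : Ω → ℝ)
    (hu : ∀ ω ω', Rf ω = Rf ω' → u ω = u ω') :
    ∑ ω, p ω * (u ω * (f ω - cEx p f (fun ω' => Rf ω' = Rf ω))) = 0 := by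
  rw [← Finset.sum_fiberwise_of_maps_to (s := univ) (t := univ.image Rf) (g := Rf)
      (fun ω _ => Finset.mem_image_of_mem Rf (Finset.mem_univ ω))]
  refine Finset.sum_eq_zero fun r hr => ?_
  obtain ⟨ω0, -, rfl⟩ := Finset.mem_image.mp hr
  have hPr : 0 < Pr p (fun ω' => Rf ω' = Rf ω0) := Pr_pos' p hp _ ω0 rfl
  calc ∑ ω ∈ univ.filter (fun ω => Rf ω = Rf ω0),
        p ω * (u ω * (f ω - cEx p f (fun ω' => Rf ω' = Rf ω)))
      = ∑ ω ∈ univ.filter (fun ω => Rf ω = Rf ω0),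
          (u ω0 * (p ω * f ω)
            - (u ω0 * cEx p f (fun ω' => Rf ω' = Rf ω0)) * p ω) := by
        refine Finset.sum_congr rfl fun ω hω => ?_
        have h1 : Rf ω = Rf ω0 := by simpa using (Finset.mem_filter.mp hω).2
        rw [show (fun ω' => Rf ω' = Rf ω) = (fun ω' => Rf ω' = Rf ω0) by rw [h1],
          hu ω ω0 h1]
        ring
    _ = u ω0 * (∑ ω ∈ univ.filter (fun ω => Rf ω = Rf ω0), p ω * f ω)
        - (u ω0 * cEx p f (fun ω' => Rf ω' = Rf ω0))
            * ∑ ω ∈ univ.filter (fun ω => Rf ω = Rf ω0), p ω := by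
        rw [Finset.sum_sub_distrib, ← Finset.mul_sum, ← Finset.mul_sum]
    _ = 0 := by
        have h2 := cEx_num p f (fun ω' => Rf ω' = Rf ω0)
        rw [if_neg hPr.ne'] at h2
        rw [← h2, ← Pr_eq' p (fun ω' => Rf ω' = Rf ω0)]
        ring

/-- Quadratic form of the covariance matrix. -/
lemma quad (p : Ω → ℝ) {n : ℕ} (Y : Ω → Fin n → ℝ) (v : Fin n → ℝ) :
    dotProduct v ((covM p Y).mulVec v)
      = ∑ ω, p ω * ((∑ i, v i * (Y ω i - Ex p (fun ω' => Y ω' i)))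
          * (∑ i, v i * (Y ω i - Ex p (fun ω' => Y ω' i)))) := by
  calc dotProduct v ((covM p Y).mulVec v)
      = ∑ i, ∑ j, ∑ ω, v i * v j * (p ω
          * ((Y ω i - Ex p fun ω' => Y ω' i) * (Y ω j - Ex p fun ω' => Y ω' j))) := by
        refine Finset.sum_congr rfl fun i _ => ?_
        rw [Matrix.mulVec, dotProduct, Finset.mul_sum]
        refine Finset.sum_congr rfl fun j _ => ?_
        simp only [covM, Matrix.of_apply, dotProduct, Ex]
        rw [Finset.sum_mul, Finset.mul_sum]
        refine Finset.sum_congr rfl fun ω _ => by ring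
    _ = ∑ ω, ∑ i, ∑ j, v i * v j * (p ω
          * ((Y ω i - Ex p fun ω' => Y ω' i) * (Y ω j - Ex p fun ω' => Y ω' j))) := by
        exact (Finset.sum_congr rfl fun i _ => Finset.sum_comm).trans Finset.sum_comm
    _ = ∑ ω, p ω * ((∑ i, v i * (Y ω i - Ex p (fun ω' => Y ω' i)))
          * (∑ i, v i * (Y ω i - Ex p (fun ω' => Y ω' i)))) := by
        refine Finset.sum_congr rfl fun ω _ => ?_
        rw [Finset.sum_mul_sum, Finset.mul_sum]
        refine Finset.sum_congr rfl fun i _ => ?_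
        rw [Finset.mul_sum]
        exact Finset.sum_congr rfl fun j _ => by ring


lemma cEx_eq' (p : Ω → ℝ) (f : Ω → ℝ) (φ : Ω → Prop) [DecidablePred φ] :
    cEx p f φ = (∑ ω ∈ univ.filter φ, p ω * f ω) / Pr p φ := by
  rw [cEx]; congr 1; exact Finset.sum_congr (by ext; simp) fun _ _ => rfl

/-- Abstract part 2: if `GR` is the conditional expectation of `GX` given the fibers of
`Rf`, then the covariance difference is positive semidefinite. -/
lemma part2 {n : ℕ} (p : Ω → ℝ) (hp : ∀ ω, 0 < p ω) (Rf : Ω → ℝ)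
    (GX GR : Ω → Fin n → ℝ)
    (hGR : ∀ ω ω', Rf ω = Rf ω' → GR ω = GR ω')
    (hcond : ∀ ω i, cEx p (fun ω' => GX ω' i) (fun ω' => Rf ω' = Rf ω) = GR ω i)
    (v : Fin n → ℝ) :
    0 ≤ dotProduct v ((covM p GX - covM p GR).mulVec v) := by
  set F : Ω → ℝ := fun ω => ∑ i, v i * GX ω i with hF
  set H : Ω → ℝ := fun ω => ∑ i, v i * GR ω i with hH
  have hHconst : ∀ ω ω', Rf ω = Rf ω' → H ω = H ω' := by
    intro ω ω' h; rw [hH]; simp only [hGR ω ω' h]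
  have hEx : ∀ Y : Ω → Fin n → ℝ,
      Ex p (fun ω' => ∑ i, v i * Y ω' i) = ∑ i, v i * Ex p (fun ω' => Y ω' i) := by
    intro Y
    rw [Ex]
    calc ∑ ω, p ω * ∑ i, v i * Y ω i
        = ∑ ω, ∑ i, v i * (p ω * Y ω i) := by
          refine Finset.sum_congr rfl fun ω _ => ?_
          rw [Finset.mul_sum]
          exact Finset.sum_congr rfl fun i _ => by ring
      _ = ∑ i, ∑ ω, v i * (p ω * Y ω i) := Finset.sum_comm
      _ = ∑ i, v i * Ex p (fun ω' => Y ω' i) :=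
          Finset.sum_congr rfl fun i _ => by rw [Ex, ← Finset.mul_sum]
  have hHcond : ∀ ω, H ω = cEx p F (fun ω' => Rf ω' = Rf ω) := by
    intro ω
    calc H ω = ∑ i, v i * cEx p (fun ω' => GX ω' i) (fun ω' => Rf ω' = Rf ω) := by
          rw [hH]
          exact Finset.sum_congr rfl fun i _ => by rw [hcond ω i]
      _ = ∑ i, v i * ((∑ ω' ∈ univ.filter (fun ω' => Rf ω' = Rf ω), p ω' * GX ω' i)
            / Pr p (fun ω' => Rf ω' = Rf ω)) :=
          Finset.sum_congr rfl fun i _ => by rw [cEx_eq']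
      _ = (∑ i, v i * (∑ ω' ∈ univ.filter (fun ω' => Rf ω' = Rf ω), p ω' * GX ω' i))
            / Pr p (fun ω' => Rf ω' = Rf ω) := by
          rw [Finset.sum_div]
          exact Finset.sum_congr rfl fun i _ => (mul_div_assoc _ _ _).symm
      _ = (∑ ω' ∈ univ.filter (fun ω' => Rf ω' = Rf ω), p ω' * F ω')
            / Pr p (fun ω' => Rf ω' = Rf ω) := by
          congr 1
          calc ∑ i, v i * ∑ ω' ∈ univ.filter (fun ω' => Rf ω' = Rf ω), p ω' * GX ω' i
              = ∑ i, ∑ ω' ∈ univ.filter (fun ω' => Rf ω' = Rf ω),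
                  v i * (p ω' * GX ω' i) :=
                Finset.sum_congr rfl fun i _ => Finset.mul_sum _ _ _
            _ = ∑ ω' ∈ univ.filter (fun ω' => Rf ω' = Rf ω), ∑ i,
                  v i * (p ω' * GX ω' i) := Finset.sum_comm
            _ = ∑ ω' ∈ univ.filter (fun ω' => Rf ω' = Rf ω), p ω' * F ω' := by
                refine Finset.sum_congr rfl fun ω' _ => ?_
                rw [hF, Finset.mul_sum]
                exact Finset.sum_congr rfl fun i _ => by ring
      _ = cEx p F (fun ω' => Rf ω' = Rf ω) := (cEx_eq' p F _).symm
  have horth : ∀ u : Ω → ℝ, (∀ ω ω', Rf ω = Rf ω' → u ω = u ω') →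
      ∑ ω, p ω * (u ω * (F ω - H ω)) = 0 := by
    intro u hu
    calc ∑ ω, p ω * (u ω * (F ω - H ω))
        = ∑ ω, p ω * (u ω * (F ω - cEx p F (fun ω' => Rf ω' = Rf ω))) :=
          Finset.sum_congr rfl fun ω _ => by rw [hHcond ω]
      _ = 0 := orth p hp Rf F u hu
  have hmm : Ex p F = Ex p H := by
    have h0 := horth (fun _ => 1) (fun _ _ _ => rfl)
    simp only [one_mul] at h0
    rw [Ex, Ex, ← sub_eq_zero, ← Finset.sum_sub_distrib, ← h0]
    exact Finset.sum_congr rfl fun ω _ => by ring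
  have hlin : ∀ (Y : Ω → Fin n → ℝ) (ω : Ω),
      ∑ i, v i * (Y ω i - Ex p fun ω' => Y ω' i)
        = (∑ i, v i * Y ω i) - Ex p (fun ω' => ∑ i, v i * Y ω' i) := by
    intro Y ω
    rw [hEx Y, ← Finset.sum_sub_distrib]
    exact Finset.sum_congr rfl fun i _ => mul_sub _ _ _
  have hq : ∀ Y : Ω → Fin n → ℝ, dotProduct v ((covM p Y).mulVec v)
      = ∑ ω, p ω * (((∑ i, v i * Y ω i) - Ex p (fun ω' => ∑ i, v i * Y ω' i))
          * ((∑ i, v i * Y ω i) - Ex p (fun ω' => ∑ i, v i * Y ω' i))) := by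
    intro Y
    rw [quad p Y v]
    exact Finset.sum_congr rfl fun ω _ => by rw [hlin Y ω]
  rw [Matrix.sub_mulVec, dotProduct_sub, hq GX, hq GR]
  have key : ∑ ω, p ω * ((F ω - Ex p F) * (F ω - Ex p F))
      - ∑ ω, p ω * ((H ω - Ex p H) * (H ω - Ex p H))
      = ∑ ω, p ω * ((F ω - H ω) * (F ω - H ω)) := by
    have o : ∑ ω, p ω * ((H ω - Ex p F) * (F ω - H ω)) = 0 :=
      horth (fun ω => H ω - Ex p F) (fun ω ω' h => by show H ω - Ex p F = H ω' - Ex p F; rw [hHconst ω ω' h])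
    rw [← hmm, ← Finset.sum_sub_distrib]
    calc ∑ ω, (p ω * ((F ω - Ex p F) * (F ω - Ex p F))
            - p ω * ((H ω - Ex p F) * (H ω - Ex p F)))
        = ∑ ω, (p ω * ((F ω - H ω) * (F ω - H ω))
            + 2 * (p ω * ((H ω - Ex p F) * (F ω - H ω)))) :=
          Finset.sum_congr rfl fun ω _ => by ring
      _ = ∑ ω, p ω * ((F ω - H ω) * (F ω - H ω))
            + 2 * ∑ ω, p ω * ((H ω - Ex p F) * (F ω - H ω)) := by
          rw [Finset.sum_add_distrib, Finset.mul_sum]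
      _ = ∑ ω, p ω * ((F ω - H ω) * (F ω - H ω)) := by
          rw [o, mul_zero, add_zero]
  rw [show Ex p (fun ω' => ∑ i, v i * GX ω' i) = Ex p F from rfl,
    show Ex p (fun ω' => ∑ i, v i * GR ω' i) = Ex p H from rfl] at *
  rw [key]
  exact Finset.sum_nonneg fun ω _ => mul_nonneg (hp ω).le (mul_self_nonneg _)

end Aux

/-- With `R = g(X)` a deterministic function of `X`, the reward-based
contribution estimator is the conditional expectation of the `X`-based one given `R`,
and hence has smaller covariance in the Loewner order. -/
theorem reward_coefficients_reduce_variance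
    {Ω α χ : Type*} [Fintype Ω] [Fintype α] [Fintype χ] {n : ℕ}
    (p : Ω → ℝ) (hp : ∀ ω, 0 < p ω) (hsum : ∑ ω, p ω = 1)
    (A0 : Ω → α) (X : Ω → χ) (g : χ → ℝ)
    (pol : α → ℝ) (hpol : ∀ a, pol a = Pr p (fun ω => A0 ω = a))
    (hpos : ∀ a, 0 < pol a)
    (c : α → Fin n → ℝ) (hc : ∑ a, c a = 0) :
    letI wX : α → χ → ℝ := fun a x =>
      cPr p (fun ω => A0 ω = a) (fun ω => X ω = x) / pol a - 1
    letI wR : α → ℝ → ℝ := fun a r =>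
      cPr p (fun ω => A0 ω = a) (fun ω => g (X ω) = r) / pol a - 1
    letI GX : Ω → Fin n → ℝ := fun ω => ∑ a, (wX a (X ω) * g (X ω)) • c a
    letI GR : Ω → Fin n → ℝ := fun ω => ∑ a, (wR a (g (X ω)) * g (X ω)) • c a
    (∀ ω i, cEx p (fun ω' => GX ω' i) (fun ω' => g (X ω') = g (X ω)) = GR ω i)
    ∧ ∀ v : Fin n → ℝ,
        0 ≤ dotProduct v ((covM p GX - covM p GR).mulVec v) := by
  have hS : ∀ ω : Ω, 0 < Pr p (fun ω' => g (X ω') = g (X ω)) :=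
    fun ω => Pr_pos' p hp (fun ω' => g (X ω') = g (X ω)) ω rfl
  have h1 : ∀ (ω : Ω) (i : Fin n),
      cEx p (fun ω' => (∑ a, ((cPr p (fun ω2 => A0 ω2 = a) (fun ω2 => X ω2 = X ω') / pol a - 1)
          * g (X ω')) • c a) i) (fun ω' => g (X ω') = g (X ω))
        = (∑ a, ((cPr p (fun ω2 => A0 ω2 = a) (fun ω2 => g (X ω2) = g (X ω)) / pol a - 1)
          * g (X ω)) • c a) i := by
    intro ω i
    rw [cEx_eq']
    simp only [Finset.sum_apply, Pi.smul_apply, smul_eq_mul]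
    have hnum : ∑ ω' ∈ univ.filter (fun ω' => g (X ω') = g (X ω)),
        p ω' * ∑ a, (cPr p (fun ω2 => A0 ω2 = a) (fun ω2 => X ω2 = X ω') / pol a - 1)
          * g (X ω') * c a i
        = ∑ a, (g (X ω) * c a i) *
            (Pr p (fun ω' => A0 ω' = a ∧ g (X ω') = g (X ω)) / pol a
              - Pr p (fun ω' => g (X ω') = g (X ω))) := by
      calc ∑ ω' ∈ univ.filter (fun ω' => g (X ω') = g (X ω)),
          p ω' * ∑ a, (cPr p (fun ω2 => A0 ω2 = a) (fun ω2 => X ω2 = X ω') / pol a - 1)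
            * g (X ω') * c a i
          = ∑ ω' ∈ univ.filter (fun ω' => g (X ω') = g (X ω)), ∑ a,
              p ω' * ((cPr p (fun ω2 => A0 ω2 = a) (fun ω2 => X ω2 = X ω') / pol a - 1)
                * g (X ω') * c a i) :=
            Finset.sum_congr rfl fun ω' _ => Finset.mul_sum _ _ _
        _ = ∑ a, ∑ ω' ∈ univ.filter (fun ω' => g (X ω') = g (X ω)),
              p ω' * ((cPr p (fun ω2 => A0 ω2 = a) (fun ω2 => X ω2 = X ω') / pol a - 1)
                * g (X ω') * c a i) := Finset.sum_comm
        _ = ∑ a, (g (X ω) * c a i) *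
            (Pr p (fun ω' => A0 ω' = a ∧ g (X ω') = g (X ω)) / pol a
              - Pr p (fun ω' => g (X ω') = g (X ω))) := by
            refine Finset.sum_congr rfl fun a _ => ?_
            calc ∑ ω' ∈ univ.filter (fun ω' => g (X ω') = g (X ω)),
                p ω' * ((cPr p (fun ω2 => A0 ω2 = a) (fun ω2 => X ω2 = X ω') / pol a - 1)
                  * g (X ω') * c a i)
                = ∑ ω' ∈ univ.filter (fun ω' => g (X ω') = g (X ω)), (g (X ω) * c a i) *
                    (p ω' * (cPr p (fun ω2 => A0 ω2 = a) (fun ω2 => X ω2 = X ω')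
                      / pol a - 1)) := by
                  refine Finset.sum_congr rfl fun ω' hω' => ?_
                  have hg : g (X ω') = g (X ω) := by
                    simpa using (Finset.mem_filter.mp hω').2
                  rw [hg]; ring
              _ = (g (X ω) * c a i) *
                  ∑ ω' ∈ univ.filter (fun ω' => g (X ω') = g (X ω)),
                    p ω' * (cPr p (fun ω2 => A0 ω2 = a) (fun ω2 => X ω2 = X ω')
                      / pol a - 1) := (Finset.mul_sum _ _ _).symm
              _ = (g (X ω) * c a i) *
                  (Pr p (fun ω' => A0 ω' = a ∧ g (X ω') = g (X ω)) / pol a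
                    - Pr p (fun ω' => g (X ω') = g (X ω))) := by
                  rw [innerSum11 p hp A0 X g a (pol a) (g (X ω))]
    rw [hnum, Finset.sum_div]
    refine Finset.sum_congr rfl fun a _ => ?_
    rw [cPr]
    have h2 : Pr p (fun ω' => g (X ω') = g (X ω)) ≠ 0 := (hS ω).ne'
    have h3 : pol a ≠ 0 := (hpos a).ne'
    field_simp
  refine ⟨h1, fun v => ?_⟩
  refine part2 p hp (fun ω => g (X ω)) _ _ ?_ (fun ω i => h1 ω i) v
  intro ω ω' h
  have h' : g (X ω) = g (X ω') := h
  rw [h']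

end
end

section
/- In a finite MDP with finite action set A, policy π(a|s) > 0, transitions p, and rewarding-outcome encoding U fully predictive of the reward with expected reward function r(u) = E[R | U = u], the action-value function satisfies Q^π(s,a) = r(s,a) + Σ_u r(u) Σ_{k=1}^{T} P^π(U_k = u | S_0 = s) · (w(s,a,u) + 1), where w(s,a,u) = [Σ_{k=1}^T P^π(U_k = u | S_0=s, A_0=a)] / [Σ_{k=1}^T P^π(U_k = u | S_0=s)] - 1 (defined when the denominator is positive), and r(s,a) = E[R_0 | S_0 = s, A_0 = a]. Consequently the advantage is A^π(s,a) = r(s,a) - Σ_{a'} π(a'|s) r(s,a') + Σ_u r(u) w(s,a,u) Σ_{k=1}^T P^π(U_k = u | S_0 = s). -/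
open Finset

attribute [local instance] Classical.propDecidable

noncomputable section

lemma Pr_nonneg' {Ω : Type*} [Fintype Ω] {p : Ω → ℝ} (hp : ∀ ω, 0 < p ω) (φ : Ω → Prop) :
    0 ≤ Pr p φ := Finset.sum_nonneg fun ω _ => (hp ω).le

lemma Pr_zero_imp {Ω : Type*} [Fintype Ω] {p : Ω → ℝ} (hp : ∀ ω, 0 < p ω) {φ : Ω → Prop}
    (h : Pr p φ = 0) : ∀ ω, ¬ φ ω := by
  intro ω hω
  have hmem : ω ∈ Finset.univ.filter φ := Finset.mem_filter.mpr ⟨Finset.mem_univ ω, hω⟩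
  have h2 := (Finset.sum_eq_zero_iff_of_nonneg (fun ω _ => (hp ω).le)).mp h ω hmem
  exact (hp ω).ne' h2

lemma Pr_zero_of {Ω : Type*} [Fintype Ω] (p : Ω → ℝ) {φ : Ω → Prop}
    (h : ∀ ω, ¬ φ ω) : Pr p φ = 0 := by
  unfold Pr
  exact Finset.sum_eq_zero fun ω hω => absurd (Finset.mem_filter.mp hω).2 (h ω)

lemma Pr_congr {Ω : Type*} [Fintype Ω] (p : Ω → ℝ) {φ ψ : Ω → Prop}
    (h : ∀ ω, φ ω ↔ ψ ω) : Pr p φ = Pr p ψ := by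
  have : φ = ψ := funext fun ω => propext (h ω)
  rw [this]

/-- In a finite-horizon MDP (trajectory space conditioned on `S_0 = s`,
rewards `R_k`, actions `A_k`, rewarding-outcome encodings `U_k` fully predictive of the
reward with `E[R_k | A_0 = a, U_k = u] = r(u)`), the action-value function satisfies
`Q(s,a) = r(s,a) + ∑_u r(u) ∑_{k=1}^T P(U_k = u | S_0 = s) (w(s,a,u) + 1)`, with
`w(s,a,u) = [∑_k P(U_k = u | s, a)]/[∑_k P(U_k = u | s)] - 1`, and consequently
`A(s,a) = r(s,a) - ∑_{a'} π(a') r(s,a') + ∑_u r(u) w(s,a,u) ∑_k P(U_k = u | s)`. -/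
theorem cocoa_advantage_decomposition
    {Ω α υ : Type*} [Fintype Ω] [Fintype α] [Fintype υ]
    (p : Ω → ℝ) (hp : ∀ ω, 0 < p ω) (hsum : ∑ ω, p ω = 1)
    (T : ℕ) (Act : ℕ → Ω → α) (Rw : ℕ → Ω → ℝ) (Uv : ℕ → Ω → υ)
    (pol : α → ℝ) (hpol : ∀ a, pol a = Pr p (fun ω => Act 0 ω = a))
    (hpos : ∀ a, 0 < pol a)
    (rU : υ → ℝ)
    (hfp : ∀ k ∈ Finset.Icc 1 T, ∀ (a : α) (u : υ),
      0 < Pr p (fun ω => Act 0 ω = a ∧ Uv k ω = u) →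
      cEx p (Rw k) (fun ω => Act 0 ω = a ∧ Uv k ω = u) = rU u)
    (a : α) :
    letI Q : α → ℝ := fun a' =>
      cEx p (fun ω => ∑ k ∈ Finset.range (T + 1), Rw k ω) (fun ω => Act 0 ω = a')
    letI r0 : α → ℝ := fun a' => cEx p (Rw 0) (fun ω => Act 0 ω = a')
    letI OU : υ → ℝ := fun u => ∑ k ∈ Finset.Icc 1 T, Pr p (fun ω => Uv k ω = u)
    letI OUa : α → υ → ℝ := fun a' u =>
      ∑ k ∈ Finset.Icc 1 T, cPr p (fun ω => Uv k ω = u) (fun ω => Act 0 ω = a')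
    letI w : α → υ → ℝ := fun a' u => OUa a' u / OU u - 1
    (Q a = r0 a + ∑ u, rU u * (OU u * (w a u + 1)))
    ∧ (Q a - ∑ a', pol a' * Q a')
        = r0 a - (∑ a', pol a' * r0 a') + ∑ u, rU u * w a u * OU u := by
  let Q : α → ℝ := fun a' =>
    cEx p (fun ω => ∑ k ∈ Finset.range (T + 1), Rw k ω) (fun ω => Act 0 ω = a')
  let r0 : α → ℝ := fun a' => cEx p (Rw 0) (fun ω => Act 0 ω = a')
  let OU : υ → ℝ := fun u => ∑ k ∈ Finset.Icc 1 T, Pr p (fun ω => Uv k ω = u)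
  let OUa : α → υ → ℝ := fun a' u =>
    ∑ k ∈ Finset.Icc 1 T, cPr p (fun ω => Uv k ω = u) (fun ω => Act 0 ω = a')
  let w : α → υ → ℝ := fun a' u => OUa a' u / OU u - 1
  show (Q a = r0 a + ∑ u, rU u * (OU u * (w a u + 1)))
    ∧ (Q a - ∑ a', pol a' * Q a')
        = r0 a - (∑ a', pol a' * r0 a') + ∑ u, rU u * w a u * OU u
  have hPrA : ∀ a' : α, 0 < Pr p (fun ω => Act 0 ω = a') := fun a' => (hpol a') ▸ hpos a'
  -- key: per time step k ≥ 1, split the numerator by the value of U_k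
  have hstep : ∀ (a' : α), ∀ k ∈ Finset.Icc 1 T,
      (∑ ω ∈ Finset.univ.filter (fun ω => Act 0 ω = a'), p ω * Rw k ω)
        = ∑ u, rU u * Pr p (fun ω => Act 0 ω = a' ∧ Uv k ω = u) := by
    intro a' k hk
    rw [← Finset.sum_fiberwise (Finset.univ.filter (fun ω => Act 0 ω = a')) (Uv k)
      (fun ω => p ω * Rw k ω)]
    refine Finset.sum_congr rfl fun u _ => ?_
    by_cases h : 0 < Pr p (fun ω => Act 0 ω = a' ∧ Uv k ω = u)
    · calc (∑ ω ∈ (Finset.univ.filter fun ω => Act 0 ω = a').filter (fun ω => Uv k ω = u),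
              p ω * Rw k ω)
          = cEx p (Rw k) (fun ω => Act 0 ω = a' ∧ Uv k ω = u)
              * Pr p (fun ω => Act 0 ω = a' ∧ Uv k ω = u) := by
            simp only [cEx]
            rw [div_mul_cancel₀ _ h.ne']
            refine Finset.sum_congr ?_ fun _ _ => rfl
            ext ω
            simp [Finset.mem_filter]
        _ = rU u * Pr p (fun ω => Act 0 ω = a' ∧ Uv k ω = u) := by rw [hfp k hk a' u h]
    · have hz : Pr p (fun ω => Act 0 ω = a' ∧ Uv k ω = u) = 0 :=
        le_antisymm (not_lt.mp h) (Pr_nonneg' hp _)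
      have hemp := Pr_zero_imp hp hz
      rw [hz, mul_zero]
      refine Finset.sum_eq_zero fun ω hω => ?_
      simp only [Finset.mem_filter] at hω
      exact absurd ⟨hω.1.2, hω.2⟩ (hemp ω)
  have hsplit : ∀ (F : ℕ → ℝ),
      ∑ k ∈ Finset.range (T+1), F k = F 0 + ∑ k ∈ Finset.Icc 1 T, F k := by
    intro F
    rw [Finset.sum_range_succ', add_comm]
    congr 1
    rw [← Finset.Ico_add_one_right_eq_Icc, Finset.sum_Ico_eq_sum_range]
    simp [Nat.add_comm]
  have hQ : ∀ a' : α, Q a' = r0 a' + ∑ u, rU u * OUa a' u := by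
    intro a'
    simp only [Q, r0, OUa, cEx, cPr, Finset.mul_sum]
    rw [Finset.sum_comm, hsplit, add_div]
    congr 1
    rw [Finset.sum_div]
    have hmid : ∀ k ∈ Finset.Icc 1 T,
        (∑ ω ∈ Finset.univ.filter (fun ω => Act 0 ω = a'), p ω * Rw k ω)
            / Pr p (fun ω => Act 0 ω = a')
          = ∑ u, rU u * (Pr p (fun ω => Uv k ω = u ∧ Act 0 ω = a')
              / Pr p (fun ω => Act 0 ω = a')) := by
      intro k hk
      rw [hstep a' k hk, Finset.sum_div]
      refine Finset.sum_congr rfl fun u _ => ?_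
      have hc : Pr p (fun ω => Uv k ω = u ∧ Act 0 ω = a')
          = Pr p (fun ω => Act 0 ω = a' ∧ Uv k ω = u) := Pr_congr p fun ω => and_comm
      rw [hc, mul_div_assoc]
    rw [Finset.sum_congr rfl hmid, Finset.sum_comm]
  have hOUzero : ∀ u, OU u = 0 → ∀ a' : α, OUa a' u = 0 := by
    intro u hu a'
    simp only [OU] at hu
    have heach : ∀ k ∈ Finset.Icc 1 T, Pr p (fun ω => Uv k ω = u) = 0 := fun k hk =>
      (Finset.sum_eq_zero_iff_of_nonneg (fun k _ => Pr_nonneg' hp _)).mp hu k hk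
    simp only [OUa, cPr]
    refine Finset.sum_eq_zero fun k hk => ?_
    have hemp := Pr_zero_imp hp (heach k hk)
    have hz : Pr p (fun ω => Uv k ω = u ∧ Act 0 ω = a') = 0 :=
      Pr_zero_of p fun ω hc => hemp ω hc.1
    rw [hz, zero_div]
  have hw : ∀ (a' : α) u, OU u * (w a' u + 1) = OUa a' u := by
    intro a' u
    simp only [w]
    by_cases h : OU u = 0
    · rw [h, zero_mul, hOUzero u h a']
    · have h1 : OUa a' u / OU u - 1 + 1 = OUa a' u / OU u := by ring
      rw [h1, mul_div_cancel₀ _ h]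
  have hOU : ∀ u, (∑ a' : α, pol a' * OUa a' u) = OU u := by
    intro u
    simp only [OUa, OU, Finset.mul_sum]
    rw [Finset.sum_comm]
    refine Finset.sum_congr rfl fun k _ => ?_
    have hdc : ∀ a' : α, pol a' *
        cPr p (fun ω => Uv k ω = u) (fun ω => Act 0 ω = a')
          = Pr p (fun ω => Uv k ω = u ∧ Act 0 ω = a') := by
      intro a'
      rw [cPr, hpol a', mul_comm, div_mul_cancel₀ _ (hPrA a').ne']
    rw [Finset.sum_congr rfl fun a' _ => hdc a']
    simp only [Pr]
    rw [← Finset.sum_fiberwise (Finset.univ.filter fun ω => Uv k ω = u) (Act 0) p]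
    refine Finset.sum_congr rfl fun a' _ => ?_
    refine Finset.sum_congr ?_ fun _ _ => rfl
    ext ω
    simp [Finset.mem_filter, and_comm, and_assoc]
  constructor
  · rw [hQ a]
    congr 1
    exact Finset.sum_congr rfl fun u _ => by rw [hw a u]
  · have hsum1 : (∑ a', pol a' * Q a') = (∑ a', pol a' * r0 a') + ∑ u, rU u * OU u := by
      simp only [hQ, mul_add]
      rw [Finset.sum_add_distrib]
      congr 1
      simp only [Finset.mul_sum]
      rw [Finset.sum_comm]
      refine Finset.sum_congr rfl fun u _ => ?_
      rw [← hOU u, Finset.mul_sum]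
      exact Finset.sum_congr rfl fun a' _ => by ring
    have hw2 : ∀ u, rU u * w a u * OU u = rU u * OUa a u - rU u * OU u := by
      intro u
      have h2 : OU u * w a u = OUa a u - OU u := by rw [← hw a u]; ring
      calc rU u * w a u * OU u = rU u * (OU u * w a u) := by ring
        _ = rU u * (OUa a u - OU u) := by rw [h2]
        _ = rU u * OUa a u - rU u * OU u := by ring
    rw [hQ a, hsum1,
      show (∑ u, rU u * w a u * OU u) = ∑ u, (rU u * OUa a u - rU u * OU u) from
        Finset.sum_congr rfl fun u _ => hw2 u,
      Finset.sum_sub_distrib]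
    ring

end
end

section
/- Let O^π(u, s) = Σ_{k=1}^{T} P^π(U_k = u | S_0 = s) and O^π(u, s, a) = Σ_{k=1}^{T} P^π(U_k = u | S_0 = s, A_0 = a) be the expected number of occurrences of rewarding outcome u in a finite-horizon MDP, where U_k is a deterministic function of S_k. Then ∇_θ O^π(u, s) = Σ_{l=0}^{T-1} Σ_{s'} P^π(S_l = s' | S_0 = s) Σ_{a∈A} ∇_θ π(a | s') O^π_{T-l}(u, s', a), i.e., the gradient of the occupancy decomposes as a sum over visited states of the policy gradient weighted by the action-conditioned occupancy from that state. -/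
open Finset

attribute [local instance] Classical.propDecidable

noncomputable section

variable {S A υ : Type*}

/-- `P^π(S_k = s' | S_0 = s, A_0 = a)` for the kernel `P` and policy `q`. -/
def stepProbA [Fintype S] [Fintype A] (P : S → A → S → ℝ) (q : S → A → ℝ) :
    ℕ → S → A → S → ℝ
  | 0, s, _, s' => if s' = s then 1 else 0
  | k + 1, s, a, s' =>
      ∑ s'' : S, P s a s'' * ∑ a'' : A, q s'' a'' * stepProbA P q k s'' a'' s'

/-- `P^π(S_k = s' | S_0 = s)` (actions marginalized under the policy `q`). -/
def stepProbS [Fintype S] [Fintype A] (P : S → A → S → ℝ) (q : S → A → ℝ) :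
    ℕ → S → S → ℝ
  | 0, s, s' => if s' = s then 1 else 0
  | k + 1, s, s' =>
      ∑ a : A, q s a * ∑ s'' : S, P s a s'' * stepProbS P q k s'' s'

/-- Action-conditioned occupancy `O^π_t(u, s, a) = ∑_{k=1}^t P^π(U_k = u | S_0 = s, A_0 = a)`
where `U_k = f(S_k)`. -/
def occA [Fintype S] [Fintype A] (P : S → A → S → ℝ) (q : S → A → ℝ) (f : S → υ)
    (t : ℕ) (u : υ) (s : S) (a : A) : ℝ :=
  ∑ k ∈ Finset.Icc 1 t, ∑ s' : S,
    if f s' = u then stepProbA P q k s a s' else 0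

/-- Occupancy `O^π_t(u, s) = ∑_{k=1}^t P^π(U_k = u | S_0 = s)`. -/
def occS [Fintype S] [Fintype A] (P : S → A → S → ℝ) (q : S → A → ℝ) (f : S → υ)
    (t : ℕ) (u : υ) (s : S) : ℝ :=
  ∑ k ∈ Finset.Icc 1 t, ∑ s' : S,
    if f s' = u then stepProbS P q k s s' else 0

/-- Reindexing sums over `Icc 1 n`. -/
lemma sum_Icc_one (n : ℕ) (F : ℕ → ℝ) :
    ∑ i ∈ Finset.Icc 1 n, F i = ∑ i ∈ Finset.range n, F (i + 1) := by
  rw [← Finset.Ico_add_one_right_eq_Icc, Finset.sum_Ico_eq_sum_range]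
  simp [Nat.add_comm]

/-- Marginalizing the first action. -/
lemma stepProbS_eq_sum [Fintype S] [Fintype A] (P : S → A → S → ℝ) (p : S → A → ℝ)
    (hp1 : ∀ s, ∑ a, p s a = 1) (k : ℕ) (s s' : S) :
    stepProbS P p k s s' = ∑ a : A, p s a * stepProbA P p k s a s' := by
  induction k generalizing s s' with
  | zero =>
      simp only [stepProbS, stepProbA, ← Finset.sum_mul, hp1, one_mul]
  | succ k ih =>
      simp only [stepProbS, stepProbA]
      refine Finset.sum_congr rfl fun a _ => ?_
      congr 1
      exact Finset.sum_congr rfl fun s'' _ => by rw [← ih]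

lemma stepProbA_succ [Fintype S] [Fintype A] (P : S → A → S → ℝ) (p : S → A → ℝ)
    (hp1 : ∀ s, ∑ a, p s a = 1) (k : ℕ) (s : S) (a : A) (s' : S) :
    stepProbA P p (k + 1) s a s' = ∑ s'' : S, P s a s'' * stepProbS P p k s'' s' := by
  simp only [stepProbA]
  exact Finset.sum_congr rfl fun s'' _ => by rw [← stepProbS_eq_sum P p hp1]

lemma occS_eq_sum [Fintype S] [Fintype A] (P : S → A → S → ℝ) (p : S → A → ℝ)
    (hp1 : ∀ s, ∑ a, p s a = 1) (f : S → υ) (t : ℕ) (u : υ) (s : S) :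
    occS P p f t u s = ∑ a : A, p s a * occA P p f t u s a := by
  simp only [occS, occA, Finset.mul_sum]
  calc ∑ k ∈ Finset.Icc 1 t, ∑ s' : S, (if f s' = u then stepProbS P p k s s' else 0)
      = ∑ k ∈ Finset.Icc 1 t, ∑ s' : S, ∑ a : A,
          p s a * (if f s' = u then stepProbA P p k s a s' else 0) := by
        refine Finset.sum_congr rfl fun k _ => Finset.sum_congr rfl fun s' _ => ?_
        rw [stepProbS_eq_sum P p hp1]
        split_ifs with h
        · rfl
        · simp
    _ = ∑ k ∈ Finset.Icc 1 t, ∑ a : A, ∑ s' : S,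
          p s a * (if f s' = u then stepProbA P p k s a s' else 0) :=
        Finset.sum_congr rfl fun k _ => Finset.sum_comm
    _ = ∑ a : A, ∑ k ∈ Finset.Icc 1 t, ∑ s' : S,
          p s a * (if f s' = u then stepProbA P p k s a s' else 0) := Finset.sum_comm

lemma occA_succ [Fintype S] [Fintype A] (P : S → A → S → ℝ) (p : S → A → ℝ)
    (hp1 : ∀ s, ∑ a, p s a = 1) (f : S → υ) (t : ℕ) (u : υ) (s : S) (a : A) :
    occA P p f (t + 1) u s a
      = ∑ s'' : S, P s a s'' * ((if f s'' = u then 1 else 0) + occS P p f t u s'') := by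
  simp only [occA, sum_Icc_one]
  have h1 : ∀ i : ℕ, (∑ s' : S, if f s' = u then stepProbA P p (i + 1) s a s' else 0)
      = ∑ s'' : S, P s a s'' * ∑ s' : S, (if f s' = u then stepProbS P p i s'' s' else 0) := by
    intro i
    calc (∑ s' : S, if f s' = u then stepProbA P p (i + 1) s a s' else 0)
        = ∑ s' : S, ∑ s'' : S,
            (if f s' = u then P s a s'' * stepProbS P p i s'' s' else 0) := by
          refine Finset.sum_congr rfl fun s' _ => ?_
          rw [stepProbA_succ P p hp1]
          split_ifs with h
          · rfl
          · simp
      _ = ∑ s'' : S, ∑ s' : S,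
            (if f s' = u then P s a s'' * stepProbS P p i s'' s' else 0) := Finset.sum_comm
      _ = ∑ s'' : S, P s a s'' * ∑ s' : S,
            (if f s' = u then stepProbS P p i s'' s' else 0) := by
          refine Finset.sum_congr rfl fun s'' _ => ?_
          rw [Finset.mul_sum]
          refine Finset.sum_congr rfl fun s' _ => ?_
          split_ifs with h <;> simp
  simp only [h1]
  rw [Finset.sum_comm]
  refine Finset.sum_congr rfl fun s'' _ => ?_
  rw [← Finset.mul_sum]
  congr 1
  have hG0 : (∑ s' : S, if f s' = u then stepProbS P p 0 s'' s' else 0)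
      = (if f s'' = u then (1 : ℝ) else 0) := by
    simp only [stepProbS]
    rw [Finset.sum_eq_single s'']
    · simp
    · intro b _ hb
      simp [hb]
    · simp
  have hGs : occS P p f t u s''
      = ∑ i ∈ Finset.range t, ∑ s' : S,
          (if f s' = u then stepProbS P p (i + 1) s'' s' else 0) := by
    simp only [occS]
    exact sum_Icc_one t _
  rw [Finset.sum_range_succ', hG0, ← hGs]
  exact add_comm _ _

/-- Policy-gradient theorem for occupancy measures: the gradient of the
occupancy `O^π_T(u, s)` with respect to the policy parameter decomposes as
`∑_{l=0}^{T-1} ∑_{s'} P^π(S_l = s' | S_0 = s) ∑_a ∇_θ π(a|s') O^π_{T-l}(u, s', a)`. -/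
theorem occupancy_policy_gradient
    [Fintype S] [Fintype A]
    (P : S → A → S → ℝ) (hPn : ∀ s a s', 0 ≤ P s a s') (hPs : ∀ s a, ∑ s', P s a s' = 1)
    (f : S → υ)
    (q : ℝ → S → A → ℝ) (g : S → A → ℝ) (θ₀ : ℝ)
    (hqn : ∀ θ s a, 0 ≤ q θ s a) (hqs : ∀ θ s, ∑ a, q θ s a = 1)
    (hd : ∀ s a, HasDerivAt (fun θ => q θ s a) (g s a) θ₀)
    (T : ℕ) (u : υ) (s : S) :
    HasDerivAt (fun θ => occS P (q θ) f T u s)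
      (∑ l ∈ Finset.range T, ∑ s' : S,
        stepProbS P (q θ₀) l s s' *
          ∑ a : A, g s' a * occA P (q θ₀) f (T - l) u s' a) θ₀ := by
  induction T generalizing s with
  | zero =>
      simp only [occS, Finset.Icc_eq_empty_of_lt Nat.zero_lt_one, Finset.sum_empty,
        Finset.range_zero]
      exact hasDerivAt_const θ₀ 0
  | succ T ih =>
      have hfun : (fun θ => occS P (q θ) f (T + 1) u s)
          = fun θ => ∑ a : A, q θ s a *
              ∑ s'' : S, P s a s'' *
                ((if f s'' = u then 1 else 0) + occS P (q θ) f T u s'') := by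
        funext θ
        rw [occS_eq_sum P (q θ) (hqs θ) f]
        exact Finset.sum_congr rfl fun a _ => by rw [occA_succ P (q θ) (hqs θ) f]
      rw [hfun]
      have h1 : HasDerivAt
          (fun θ => ∑ a : A, q θ s a *
              ∑ s'' : S, P s a s'' *
                ((if f s'' = u then 1 else 0) + occS P (q θ) f T u s''))
          (∑ a : A,
            (g s a * ∑ s'' : S, P s a s'' *
                ((if f s'' = u then 1 else 0) + occS P (q θ₀) f T u s'')
              + q θ₀ s a * ∑ s'' : S, P s a s'' *
                  (∑ l ∈ Finset.range T, ∑ s' : S,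
                    stepProbS P (q θ₀) l s'' s' *
                      ∑ a : A, g s' a * occA P (q θ₀) f (T - l) u s' a))) θ₀ := by
        refine HasDerivAt.fun_sum fun a _ => ?_
        refine (hd s a).mul (HasDerivAt.fun_sum fun s'' _ => ?_)
        simpa using ((hasDerivAt_const θ₀ ((if f s'' = u then (1:ℝ) else 0))).add
          (ih s'')).const_mul (P s a s'')
      have h0 : (∑ s' : S, stepProbS P (q θ₀) 0 s s' *
            ∑ a : A, g s' a * occA P (q θ₀) f (T + 1 - 0) u s' a)
          = ∑ a : A, g s a * ∑ s'' : S, P s a s'' *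
              ((if f s'' = u then 1 else 0) + occS P (q θ₀) f T u s'') := by
        rw [Finset.sum_eq_single s]
        · have h00 : stepProbS P (q θ₀) 0 s s = 1 := by simp [stepProbS]
          rw [h00, one_mul, Nat.sub_zero]
          exact Finset.sum_congr rfl fun a _ => by
            rw [occA_succ P (q θ₀) (hqs θ₀) f]
        · intro b _ hb
          simp [stepProbS, hb]
        · simp
      have hsucc : (∑ m ∈ Finset.range T, ∑ s' : S,
            stepProbS P (q θ₀) (m + 1) s s' *
              ∑ a : A, g s' a * occA P (q θ₀) f (T + 1 - (m + 1)) u s' a)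
          = ∑ a : A, q θ₀ s a * ∑ s'' : S, P s a s'' *
              (∑ l ∈ Finset.range T, ∑ s' : S,
                stepProbS P (q θ₀) l s'' s' *
                  ∑ a : A, g s' a * occA P (q θ₀) f (T - l) u s' a) := by
        calc (∑ m ∈ Finset.range T, ∑ s' : S,
              stepProbS P (q θ₀) (m + 1) s s' *
                ∑ a : A, g s' a * occA P (q θ₀) f (T + 1 - (m + 1)) u s' a)
            = ∑ m ∈ Finset.range T, ∑ s' : S, ∑ a : A, ∑ s'' : S,
                q θ₀ s a * (P s a s'' * (stepProbS P (q θ₀) m s'' s' *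
                  ∑ a' : A, g s' a' * occA P (q θ₀) f (T - m) u s' a')) := by
              refine Finset.sum_congr rfl fun m _ => Finset.sum_congr rfl fun s' _ => ?_
              have hms : T + 1 - (m + 1) = T - m := Nat.succ_sub_succ T m
              have hstep : stepProbS P (q θ₀) (m + 1) s s'
                  = ∑ a : A, q θ₀ s a * ∑ s'' : S, P s a s'' * stepProbS P (q θ₀) m s'' s' := by
                simp only [stepProbS]
              rw [hms, hstep, Finset.sum_mul]
              refine Finset.sum_congr rfl fun a _ => ?_
              rw [mul_assoc, Finset.sum_mul, Finset.mul_sum]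
              exact Finset.sum_congr rfl fun s'' _ => by ring
          _ = ∑ m ∈ Finset.range T, ∑ a : A, ∑ s' : S, ∑ s'' : S,
                q θ₀ s a * (P s a s'' * (stepProbS P (q θ₀) m s'' s' *
                  ∑ a' : A, g s' a' * occA P (q θ₀) f (T - m) u s' a')) :=
              Finset.sum_congr rfl fun m _ => Finset.sum_comm
          _ = ∑ a : A, ∑ m ∈ Finset.range T, ∑ s' : S, ∑ s'' : S,
                q θ₀ s a * (P s a s'' * (stepProbS P (q θ₀) m s'' s' *
                  ∑ a' : A, g s' a' * occA P (q θ₀) f (T - m) u s' a')) :=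
              Finset.sum_comm
          _ = ∑ a : A, ∑ m ∈ Finset.range T, ∑ s'' : S, ∑ s' : S,
                q θ₀ s a * (P s a s'' * (stepProbS P (q θ₀) m s'' s' *
                  ∑ a' : A, g s' a' * occA P (q θ₀) f (T - m) u s' a')) :=
              Finset.sum_congr rfl fun a _ => Finset.sum_congr rfl fun m _ => Finset.sum_comm
          _ = ∑ a : A, ∑ s'' : S, ∑ m ∈ Finset.range T, ∑ s' : S,
                q θ₀ s a * (P s a s'' * (stepProbS P (q θ₀) m s'' s' *
                  ∑ a' : A, g s' a' * occA P (q θ₀) f (T - m) u s' a')) :=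
              Finset.sum_congr rfl fun a _ => Finset.sum_comm
          _ = ∑ a : A, q θ₀ s a * ∑ s'' : S, P s a s'' *
                (∑ l ∈ Finset.range T, ∑ s' : S,
                  stepProbS P (q θ₀) l s'' s' *
                    ∑ a : A, g s' a * occA P (q θ₀) f (T - l) u s' a) := by
              refine Finset.sum_congr rfl fun a _ => ?_
              conv_rhs => rw [Finset.mul_sum]
              refine Finset.sum_congr rfl fun s'' _ => ?_
              conv_rhs => rw [Finset.mul_sum, Finset.mul_sum]
              refine Finset.sum_congr rfl fun m _ => ?_
              conv_rhs => rw [Finset.mul_sum, Finset.mul_sum]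
      have heq : (∑ l ∈ Finset.range (T + 1), ∑ s' : S,
            stepProbS P (q θ₀) l s s' *
              ∑ a : A, g s' a * occA P (q θ₀) f (T + 1 - l) u s' a)
          = ∑ a : A,
            (g s a * ∑ s'' : S, P s a s'' *
                ((if f s'' = u then 1 else 0) + occS P (q θ₀) f T u s'')
              + q θ₀ s a * ∑ s'' : S, P s a s'' *
                  (∑ l ∈ Finset.range T, ∑ s' : S,
                    stepProbS P (q θ₀) l s'' s' *
                      ∑ a : A, g s' a * occA P (q θ₀) f (T - l) u s' a)) := by
        rw [Finset.sum_add_distrib, Finset.sum_range_succ', h0, hsucc]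
        exact add_comm _ _
      rw [heq]
      exact h1
end
end

section
/- Consider a finite MDP with discount γ ∈ (0,1), finite action set A, policy π(a|s) > 0, rewarding-outcome encoding U fully predictive of the reward with r(u) = E[R | U = u], and n ≥ 2. Define w_{n,γ}(s,a,u) = [Σ_{k=1}^{n-1} γ^k P^π(U_k=u | s,a)] / [Σ_{k=1}^{n-1} γ^k P^π(U_k=u | s)] - 1 and w_n(s,a,s') = P^π(S_n=s' | s,a)/P^π(S_n=s' | s) - 1 (defined when denominators are positive). Then the advantage satisfies A^π(s,a) = r(s,a) - Σ_{a'} π(a'|s) r(s,a') + E_{T∼τ(s,π)}[Σ_{k=1}^{n-1} γ^k w_{n,γ}(s,a,U_k) R_k + γ^n w_n(s,a,S_n) V^π(S_n)]. -/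
open Finset

attribute [local instance] Classical.propDecidable

noncomputable section

variable {S A R : Type*}

/-- Joint distribution of `(S_k, A_k)` given `S_0 = s, A_0 = a`, under transition kernel
`P` and policy `pol`. -/
def jointDist [Fintype S] [Fintype A] (P : S → A → S → ℝ) (pol : S → A → ℝ) :
    ℕ → S → A → S → A → ℝ
  | 0, s, a, s', a' => if s' = s ∧ a' = a then 1 else 0
  | k + 1, s, a, s', a' =>
      (∑ s₂ : S, ∑ a₂ : A, jointDist P pol k s a s₂ a₂ * P s₂ a₂ s') * pol s' a'

/-- Expected immediate reward `r(s,a)`, where `pr` is the reward kernel over the finite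
reward-value type `R` with values `ρ`. -/
def rexp [Fintype R] (pr : S → A → R → ℝ) (ρ : R → ℝ) (s : S) (a : A) : ℝ :=
  ∑ x : R, pr s a x * ρ x

/-- Discounted action-value function `Q^π(s,a) = ∑_{k≥0} γ^k E[R_k | S_0 = s, A_0 = a]`. -/
def Qval [Fintype S] [Fintype A] [Fintype R] (P : S → A → S → ℝ) (pol : S → A → ℝ)
    (pr : S → A → R → ℝ) (ρ : R → ℝ) (γ : ℝ) (s : S) (a : A) : ℝ :=
  ∑' k : ℕ, γ ^ k * ∑ s' : S, ∑ a' : A, jointDist P pol k s a s' a' * rexp pr ρ s' a'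

/-- Discounted value function `V^π(s) = ∑_a π(a|s) Q^π(s,a)`. -/
def Vval [Fintype S] [Fintype A] [Fintype R] (P : S → A → S → ℝ) (pol : S → A → ℝ)
    (pr : S → A → R → ℝ) (ρ : R → ℝ) (γ : ℝ) (s : S) : ℝ :=
  ∑ a : A, pol s a * Qval P pol pr ρ γ s a

/-- `P^π(S_k = s' | S_0 = s, A_0 = a)`. -/
def stateDist [Fintype S] [Fintype A] (P : S → A → S → ℝ) (pol : S → A → ℝ)
    (k : ℕ) (s : S) (a : A) (s' : S) : ℝ :=
  ∑ a' : A, jointDist P pol k s a s' a'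

/-- `P^π(U_k = u | S_0 = s, A_0 = a)` where `U_k = f(S_k, A_k, R_k)`. -/
def outcomeDist {υ : Type*} [Fintype S] [Fintype A] [Fintype R]
    (P : S → A → S → ℝ) (pol : S → A → ℝ) (pr : S → A → R → ℝ) (f : S → A → R → υ)
    (k : ℕ) (s : S) (a : A) (u : υ) : ℝ :=
  ∑ s' : S, ∑ a' : A, ∑ x : R,
    if f s' a' x = u then jointDist P pol k s a s' a' * pr s' a' x else 0

lemma sum_nest_comm {M : Type*} [Fintype S] [Fintype A] [AddCommMonoid M]
    (g : S → A → S → A → M) :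
    ∑ s₂ : S, ∑ a₂ : A, ∑ s₁ : S, ∑ a₁ : A, g s₂ a₂ s₁ a₁
      = ∑ s₁ : S, ∑ a₁ : A, ∑ s₂ : S, ∑ a₂ : A, g s₂ a₂ s₁ a₁ := by
  calc ∑ s₂ : S, ∑ a₂ : A, ∑ s₁ : S, ∑ a₁ : A, g s₂ a₂ s₁ a₁
      = ∑ s₂ : S, ∑ s₁ : S, ∑ a₂ : A, ∑ a₁ : A, g s₂ a₂ s₁ a₁ :=
        Finset.sum_congr rfl fun _ _ => Finset.sum_comm
    _ = ∑ s₁ : S, ∑ s₂ : S, ∑ a₂ : A, ∑ a₁ : A, g s₂ a₂ s₁ a₁ := Finset.sum_comm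
    _ = ∑ s₁ : S, ∑ s₂ : S, ∑ a₁ : A, ∑ a₂ : A, g s₂ a₂ s₁ a₁ :=
        Finset.sum_congr rfl fun _ _ => Finset.sum_congr rfl fun _ _ => Finset.sum_comm
    _ = ∑ s₁ : S, ∑ a₁ : A, ∑ s₂ : S, ∑ a₂ : A, g s₂ a₂ s₁ a₁ :=
        Finset.sum_congr rfl fun _ _ => Finset.sum_comm

section aux
variable [Fintype S] [Fintype A] [Fintype R]
variable (P : S → A → S → ℝ) (pol : S → A → ℝ) (pr : S → A → R → ℝ) (ρ : R → ℝ)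

lemma jd_nonneg (hPn : ∀ s a s', 0 ≤ P s a s') (hpoln : ∀ s a, 0 ≤ pol s a) :
    ∀ k s a s' a', 0 ≤ jointDist P pol k s a s' a' := by
  intro k
  induction k with
  | zero => intro s a s' a'; simp only [jointDist]; split <;> norm_num
  | succ k ih =>
    intro s a s' a'
    simp only [jointDist]
    apply mul_nonneg _ (hpoln _ _)
    apply Finset.sum_nonneg; intro s₂ _
    apply Finset.sum_nonneg; intro a₂ _
    exact mul_nonneg (ih s a s₂ a₂) (hPn _ _ _)

lemma jd_sum (hPs : ∀ s a, ∑ s', P s a s' = 1) (hpols : ∀ s, ∑ a, pol s a = 1) :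
    ∀ k s a, ∑ s' : S, ∑ a' : A, jointDist P pol k s a s' a' = 1 := by
  intro k
  induction k with
  | zero => intro s a; simp [jointDist, ite_and]
  | succ k ih =>
    intro s a
    simp only [jointDist]
    calc ∑ s' : S, ∑ a' : A,
            (∑ s₂ : S, ∑ a₂ : A, jointDist P pol k s a s₂ a₂ * P s₂ a₂ s') * pol s' a'
        = ∑ s' : S, ∑ s₂ : S, ∑ a₂ : A, jointDist P pol k s a s₂ a₂ * P s₂ a₂ s' := by
          refine Finset.sum_congr rfl fun s' _ => ?_
          rw [← Finset.mul_sum, hpols s', mul_one]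
      _ = ∑ s₂ : S, ∑ a₂ : A, jointDist P pol k s a s₂ a₂ * ∑ s' : S, P s₂ a₂ s' := by
          rw [Finset.sum_comm]
          exact Finset.sum_congr rfl fun s₂ _ => by
            rw [Finset.sum_comm]
            exact Finset.sum_congr rfl fun a₂ _ => by rw [Finset.mul_sum]
      _ = 1 := by simp [hPs, ih s a]

lemma jd_le_one (hPn : ∀ s a s', 0 ≤ P s a s') (hpoln : ∀ s a, 0 ≤ pol s a)
    (hPs : ∀ s a, ∑ s', P s a s' = 1) (hpols : ∀ s, ∑ a, pol s a = 1)
    (k : ℕ) (s : S) (a : A) (s' : S) (a' : A) :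
    jointDist P pol k s a s' a' ≤ 1 := by
  have h1 := jd_sum P pol hPs hpols k s a
  calc jointDist P pol k s a s' a'
      ≤ ∑ a₂ : A, jointDist P pol k s a s' a₂ :=
        Finset.single_le_sum (fun i _ => jd_nonneg P pol hPn hpoln k s a s' i) (mem_univ a')
    _ ≤ ∑ s₂ : S, ∑ a₂ : A, jointDist P pol k s a s₂ a₂ :=
        Finset.single_le_sum (fun i _ => Finset.sum_nonneg fun j _ =>
          jd_nonneg P pol hPn hpoln k s a i j) (mem_univ s')
    _ = 1 := h1

lemma jd_chapman : ∀ (j m : ℕ) (s : S) (a : A) (s' : S) (a' : A),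
    jointDist P pol (m + j) s a s' a'
      = ∑ s₂ : S, ∑ a₂ : A, jointDist P pol m s a s₂ a₂ * jointDist P pol j s₂ a₂ s' a' := by
  intro j
  induction j with
  | zero =>
    intro m s a s' a'
    simp [jointDist, ite_and, mul_ite, Finset.sum_ite_eq]
  | succ j ih =>
    intro m s a s' a'
    show jointDist P pol ((m + j) + 1) s a s' a' = _
    simp only [jointDist, Finset.sum_mul, Finset.mul_sum, mul_assoc]
    simp only [ih, Finset.sum_mul, mul_assoc]
    exact sum_nest_comm (fun s₁ a₁ s₂ a₂ => jointDist P pol m s a s₂ a₂ *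
      (jointDist P pol j s₂ a₂ s₁ a₁ * (P s₁ a₁ s' * pol s' a')))

def gfun (k : ℕ) (s : S) (a : A) : ℝ :=
  ∑ s' : S, ∑ a' : A, jointDist P pol k s a s' a' * rexp pr ρ s' a'

lemma gfun_zero (s : S) (a : A) : gfun P pol pr ρ 0 s a = rexp pr ρ s a := by
  simp [gfun, jointDist, ite_and, Finset.sum_ite_eq]

lemma jd_factor (hpols : ∀ s, ∑ a, pol s a = 1) (k : ℕ) (s : S) (a : A) (s' : S) (a' : A) :
    jointDist P pol (k + 1) s a s' a' = stateDist P pol (k + 1) s a s' * pol s' a' := by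
  simp only [jointDist, stateDist]
  rw [← Finset.mul_sum, hpols s', mul_one]

lemma sd_nonneg (hPn : ∀ s a s', 0 ≤ P s a s') (hpoln : ∀ s a, 0 ≤ pol s a)
    (k : ℕ) (s : S) (a : A) (s' : S) : 0 ≤ stateDist P pol k s a s' :=
  Finset.sum_nonneg fun a' _ => jd_nonneg P pol hPn hpoln k s a s' a'

lemma gfun_chapman (n i : ℕ) (s : S) (a : A) :
    gfun P pol pr ρ (n + i) s a
      = ∑ s₂ : S, ∑ a₂ : A, jointDist P pol n s a s₂ a₂ * gfun P pol pr ρ i s₂ a₂ := by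
  simp only [gfun, jd_chapman P pol i n, Finset.sum_mul, Finset.mul_sum, mul_assoc]
  exact sum_nest_comm _

variable {γ : ℝ}

lemma summable_g (hγ : γ ∈ Set.Ioo (0:ℝ) 1)
    (hPn : ∀ s a s', 0 ≤ P s a s') (hPs : ∀ s a, ∑ s', P s a s' = 1)
    (hpoln : ∀ s a, 0 ≤ pol s a) (hpols : ∀ s, ∑ a, pol s a = 1) (s : S) (a : A) :
    Summable (fun k => γ ^ k * gfun P pol pr ρ k s a) := by
  refine Summable.of_norm_bounded
    (g := fun k => (∑ s' : S, ∑ a' : A, |rexp pr ρ s' a'|) * γ ^ k)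
    ((summable_geometric_of_lt_one hγ.1.le hγ.2).mul_left _) (fun k => ?_)
  rw [norm_mul, norm_pow, Real.norm_eq_abs, Real.norm_eq_abs, abs_of_pos hγ.1, mul_comm]
  apply mul_le_mul_of_nonneg_right _ (pow_nonneg hγ.1.le k)
  calc |gfun P pol pr ρ k s a|
      ≤ ∑ s' : S, |∑ a' : A, jointDist P pol k s a s' a' * rexp pr ρ s' a'| :=
        Finset.abs_sum_le_sum_abs _ _
    _ ≤ ∑ s' : S, ∑ a' : A, |jointDist P pol k s a s' a' * rexp pr ρ s' a'| :=
        Finset.sum_le_sum fun s' _ => Finset.abs_sum_le_sum_abs _ _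
    _ ≤ ∑ s' : S, ∑ a' : A, |rexp pr ρ s' a'| := by
        refine Finset.sum_le_sum fun s' _ => Finset.sum_le_sum fun a' _ => ?_
        rw [abs_mul, abs_of_nonneg (jd_nonneg P pol hPn hpoln k s a s' a')]
        exact mul_le_of_le_one_left (abs_nonneg _)
          (jd_le_one P pol hPn hpoln hPs hpols k s a s' a')

lemma Qval_split (hγ : γ ∈ Set.Ioo (0:ℝ) 1)
    (hPn : ∀ s a s', 0 ≤ P s a s') (hPs : ∀ s a, ∑ s', P s a s' = 1)
    (hpoln : ∀ s a, 0 ≤ pol s a) (hpols : ∀ s, ∑ a, pol s a = 1)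
    (n : ℕ) (s : S) (a : A) :
    Qval P pol pr ρ γ s a
      = (∑ k ∈ Finset.range n, γ ^ k * gfun P pol pr ρ k s a)
        + γ ^ n * ∑ s₂ : S, ∑ a₂ : A,
            jointDist P pol n s a s₂ a₂ * Qval P pol pr ρ γ s₂ a₂ := by
  have hs := summable_g P pol pr ρ hγ hPn hPs hpoln hpols
  have key := Summable.sum_add_tsum_nat_add n (hs s a)
  rw [show Qval P pol pr ρ γ s a = ∑' k, γ ^ k * gfun P pol pr ρ k s a from rfl, ← key]
  congr 1
  calc ∑' i, γ ^ (i + n) * gfun P pol pr ρ (i + n) s a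
      = ∑' i, ∑ s₂ : S, ∑ a₂ : A,
          jointDist P pol n s a s₂ a₂ * (γ ^ n * (γ ^ i * gfun P pol pr ρ i s₂ a₂)) := by
        refine tsum_congr fun i => ?_
        rw [add_comm i n, gfun_chapman, Finset.mul_sum]
        refine Finset.sum_congr rfl fun s₂ _ => ?_
        rw [Finset.mul_sum]
        refine Finset.sum_congr rfl fun a₂ _ => ?_
        ring
    _ = ∑ s₂ : S, ∑ a₂ : A,
          jointDist P pol n s a s₂ a₂ * (γ ^ n * ∑' i, γ ^ i * gfun P pol pr ρ i s₂ a₂) := by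
        rw [Summable.tsum_finsetSum (fun s₂ _ => summable_sum fun a₂ _ =>
          (((hs s₂ a₂).mul_left (γ ^ n)).mul_left (jointDist P pol n s a s₂ a₂)))]
        refine Finset.sum_congr rfl fun s₂ _ => ?_
        rw [Summable.tsum_finsetSum (fun a₂ _ =>
          (((hs s₂ a₂).mul_left (γ ^ n)).mul_left (jointDist P pol n s a s₂ a₂)))]
        refine Finset.sum_congr rfl fun a₂ _ => ?_
        rw [tsum_mul_left, tsum_mul_left]
    _ = γ ^ n * ∑ s₂ : S, ∑ a₂ : A,
          jointDist P pol n s a s₂ a₂ * Qval P pol pr ρ γ s₂ a₂ := by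
        rw [Finset.mul_sum]
        refine Finset.sum_congr rfl fun s₂ _ => ?_
        rw [Finset.mul_sum]
        refine Finset.sum_congr rfl fun a₂ _ => ?_
        show _ = γ ^ n * (jointDist P pol n s a s₂ a₂ * ∑' k, γ ^ k * gfun P pol pr ρ k s₂ a₂)
        ring

lemma Qval_split_V (hγ : γ ∈ Set.Ioo (0:ℝ) 1)
    (hPn : ∀ s a s', 0 ≤ P s a s') (hPs : ∀ s a, ∑ s', P s a s' = 1)
    (hpoln : ∀ s a, 0 ≤ pol s a) (hpols : ∀ s, ∑ a, pol s a = 1)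
    (n : ℕ) (hn : 1 ≤ n) (s : S) (a : A) :
    Qval P pol pr ρ γ s a
      = (∑ k ∈ Finset.range n, γ ^ k * gfun P pol pr ρ k s a)
        + γ ^ n * ∑ s₂ : S, stateDist P pol n s a s₂ * Vval P pol pr ρ γ s₂ := by
  obtain ⟨m, rfl⟩ : ∃ m, n = m + 1 := ⟨n - 1, by omega⟩
  rw [Qval_split P pol pr ρ hγ hPn hPs hpoln hpols (m+1) s a]
  congr 2
  refine Finset.sum_congr rfl fun s₂ _ => ?_
  rw [Vval, Finset.mul_sum]
  refine Finset.sum_congr rfl fun a₂ _ => ?_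
  rw [jd_factor P pol hpols m s a s₂ a₂]
  ring

section outcome
variable {υ : Type*} (f : S → A → R → υ) (rU : υ → ℝ)

lemma od_nonneg (hPn : ∀ s a s', 0 ≤ P s a s') (hpoln : ∀ s a, 0 ≤ pol s a)
    (hprn : ∀ s a x, 0 ≤ pr s a x) (k : ℕ) (s : S) (a : A) (u : υ) :
    0 ≤ outcomeDist P pol pr f k s a u := by
  refine Finset.sum_nonneg fun s' _ => Finset.sum_nonneg fun a' _ =>
    Finset.sum_nonneg fun x _ => ?_
  split
  · exact mul_nonneg (jd_nonneg P pol hPn hpoln k s a s' a') (hprn _ _ _)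
  · exact le_refl _

lemma od_eq (k : ℕ) (s : S) (a : A) (u : υ) :
    outcomeDist P pol pr f k s a u
      = ∑ s' : S, ∑ a' : A, jointDist P pol k s a s' a' *
          ∑ x ∈ Finset.univ.filter (fun x => f s' a' x = u), pr s' a' x := by
  refine Finset.sum_congr rfl fun s' _ => Finset.sum_congr rfl fun a' _ => ?_
  rw [Finset.mul_sum, Finset.sum_filter]

lemma hfp_ext (hprn : ∀ s a x, 0 ≤ pr s a x)
    (hfp : ∀ (s : S) (a : A) (u : υ),
      0 < ∑ x ∈ Finset.univ.filter (fun x => f s a x = u), pr s a x →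
      (∑ x ∈ Finset.univ.filter (fun x => f s a x = u), pr s a x * ρ x)
        = rU u * ∑ x ∈ Finset.univ.filter (fun x => f s a x = u), pr s a x)
    (s' : S) (a' : A) (u : υ) :
    (∑ x ∈ Finset.univ.filter (fun x => f s' a' x = u), pr s' a' x * ρ x)
      = rU u * ∑ x ∈ Finset.univ.filter (fun x => f s' a' x = u), pr s' a' x := by
  rcases (Finset.sum_nonneg fun x _ => hprn s' a' x :
      (0:ℝ) ≤ ∑ x ∈ Finset.univ.filter (fun x => f s' a' x = u), pr s' a' x).lt_or_eq with h | h
  · exact hfp s' a' u h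
  · have hz : ∀ x ∈ Finset.univ.filter (fun x => f s' a' x = u), pr s' a' x = 0 :=
      (Finset.sum_eq_zero_iff_of_nonneg (fun x _ => hprn s' a' x)).mp h.symm
    rw [Finset.sum_eq_zero (fun x hx => by rw [hz x hx, zero_mul]), ← h, mul_zero]

lemma triple_eq (T : Finset υ) (hT : ∀ s' a' x, f s' a' x ∈ T)
    (hre : ∀ s' a' u, (∑ x ∈ Finset.univ.filter (fun x => f s' a' x = u), pr s' a' x * ρ x)
      = rU u * ∑ x ∈ Finset.univ.filter (fun x => f s' a' x = u), pr s' a' x)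
    (w : υ → ℝ) (k : ℕ) (s : S) (a : A) :
    ∑ s' : S, ∑ a' : A, ∑ x : R,
        jointDist P pol k s a s' a' * pr s' a' x * (w (f s' a' x) * ρ x)
      = ∑ u ∈ T, w u * (rU u * outcomeDist P pol pr f k s a u) := by
  have step1 : ∀ s' a', (∑ x : R,
        jointDist P pol k s a s' a' * pr s' a' x * (w (f s' a' x) * ρ x))
      = ∑ u ∈ T, jointDist P pol k s a s' a' *
          (w u * (rU u * ∑ x ∈ Finset.univ.filter (fun x => f s' a' x = u), pr s' a' x)) := by
    intro s' a'
    rw [← Finset.sum_fiberwise_of_maps_to (fun x _ => hT s' a' x)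
      (fun x => jointDist P pol k s a s' a' * pr s' a' x * (w (f s' a' x) * ρ x))]
    refine Finset.sum_congr rfl fun u _ => ?_
    calc ∑ x ∈ Finset.univ.filter (fun x => f s' a' x = u),
            jointDist P pol k s a s' a' * pr s' a' x * (w (f s' a' x) * ρ x)
        = ∑ x ∈ Finset.univ.filter (fun x => f s' a' x = u),
            (jointDist P pol k s a s' a' * w u) * (pr s' a' x * ρ x) :=
          Finset.sum_congr rfl fun x hx => by
            rw [(Finset.mem_filter.mp hx).2]; ring
      _ = (jointDist P pol k s a s' a' * w u) *
            ∑ x ∈ Finset.univ.filter (fun x => f s' a' x = u), pr s' a' x * ρ x := by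
          rw [Finset.mul_sum]
      _ = _ := by rw [hre s' a' u]; ring
  simp only [step1]
  calc ∑ s' : S, ∑ a' : A, ∑ u ∈ T, jointDist P pol k s a s' a' *
          (w u * (rU u * ∑ x ∈ Finset.univ.filter (fun x => f s' a' x = u), pr s' a' x))
      = ∑ u ∈ T, ∑ s' : S, ∑ a' : A, jointDist P pol k s a s' a' *
          (w u * (rU u * ∑ x ∈ Finset.univ.filter (fun x => f s' a' x = u), pr s' a' x)) := by
        rw [show (∑ s' : S, ∑ a' : A, ∑ u ∈ T, jointDist P pol k s a s' a' *
            (w u * (rU u * ∑ x ∈ Finset.univ.filter (fun x => f s' a' x = u), pr s' a' x)))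
          = ∑ s' : S, ∑ u ∈ T, ∑ a' : A, jointDist P pol k s a s' a' *
            (w u * (rU u * ∑ x ∈ Finset.univ.filter (fun x => f s' a' x = u), pr s' a' x))
          from Finset.sum_congr rfl fun _ _ => Finset.sum_comm]
        exact Finset.sum_comm
    _ = ∑ u ∈ T, w u * (rU u * outcomeDist P pol pr f k s a u) := by
        refine Finset.sum_congr rfl fun u _ => ?_
        rw [od_eq, Finset.mul_sum, Finset.mul_sum]
        refine Finset.sum_congr rfl fun s' _ => ?_
        rw [Finset.mul_sum, Finset.mul_sum]
        refine Finset.sum_congr rfl fun a' _ => ?_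
        ring

lemma sum_rU_od (T : Finset υ) (hT : ∀ s' a' x, f s' a' x ∈ T)
    (hre : ∀ s' a' u, (∑ x ∈ Finset.univ.filter (fun x => f s' a' x = u), pr s' a' x * ρ x)
      = rU u * ∑ x ∈ Finset.univ.filter (fun x => f s' a' x = u), pr s' a' x)
    (k : ℕ) (s : S) (a : A) :
    ∑ u ∈ T, rU u * outcomeDist P pol pr f k s a u = gfun P pol pr ρ k s a := by
  have h := triple_eq P pol pr ρ f rU T hT hre (fun _ => 1) k s a
  simp only [one_mul] at h
  rw [← h]
  refine Finset.sum_congr rfl fun s' _ => Finset.sum_congr rfl fun a' _ => ?_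
  rw [show (rexp pr ρ s' a' : ℝ) = ∑ x : R, pr s' a' x * ρ x from rfl, Finset.mul_sum]
  refine Finset.sum_congr rfl fun x _ => ?_
  ring

end outcome
end aux

section main
variable [Fintype S] [Fintype A] [Fintype R] {υ : Type*}
variable (P : S → A → S → ℝ) (pol : S → A → ℝ) (pr : S → A → R → ℝ) (ρ : R → ℝ)
    (f : S → A → R → υ) (rU : υ → ℝ) (γ : ℝ)

theorem main_aux
    (hγ : γ ∈ Set.Ioo (0 : ℝ) 1) (n : ℕ) (hn : 2 ≤ n)
    (hPn : ∀ s a s', 0 ≤ P s a s') (hPs : ∀ s a, ∑ s', P s a s' = 1)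
    (hprn : ∀ s a x, 0 ≤ pr s a x)
    (hpoln : ∀ s a, 0 < pol s a) (hpols : ∀ s, ∑ a, pol s a = 1)
    (hfp : ∀ (s : S) (a : A) (u : υ),
      0 < ∑ x ∈ Finset.univ.filter (fun x => f s a x = u), pr s a x →
      (∑ x ∈ Finset.univ.filter (fun x => f s a x = u), pr s a x * ρ x)
        = rU u * ∑ x ∈ Finset.univ.filter (fun x => f s a x = u), pr s a x)
    (s : S) (a : A) (wU : υ → ℝ) (wS : S → ℝ)
    (hwU : ∀ u, wU u =
      (∑ k ∈ Finset.Icc 1 (n - 1), γ ^ k * outcomeDist P pol pr f k s a u)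
        / (∑ k ∈ Finset.Icc 1 (n - 1), γ ^ k *
            ∑ a0 : A, pol s a0 * outcomeDist P pol pr f k s a0 u) - 1)
    (hwS : ∀ s', wS s' = stateDist P pol n s a s'
        / (∑ a0 : A, pol s a0 * stateDist P pol n s a0 s') - 1) :
    Qval P pol pr ρ γ s a - Vval P pol pr ρ γ s
      = rexp pr ρ s a - (∑ a' : A, pol s a' * rexp pr ρ s a')
        + ∑ a0 : A, pol s a0 *
            ((∑ k ∈ Finset.Icc 1 (n - 1), γ ^ k *
                ∑ s' : S, ∑ a' : A, ∑ x : R,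
                  jointDist P pol k s a0 s' a' * pr s' a' x * (wU (f s' a' x) * ρ x))
              + γ ^ n * ∑ s' : S,
                  stateDist P pol n s a0 s' * (wS s' * Vval P pol pr ρ γ s')) := by
  have hpoln' : ∀ s a, 0 ≤ pol s a := fun s a => (hpoln s a).le
  set T : Finset υ := Finset.image (fun p : S × A × R => f p.1 p.2.1 p.2.2) Finset.univ
    with hTdef
  have hT : ∀ s' a' x, f s' a' x ∈ T := fun s' a' x =>
    Finset.mem_image.mpr ⟨(s', a', x), Finset.mem_univ _, rfl⟩
  have hre := hfp_ext pr ρ f rU hprn hfp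
  -- D u = 0 → N u = 0
  have hDN : ∀ u, (∑ k ∈ Finset.Icc 1 (n - 1), γ ^ k *
        ∑ a0 : A, pol s a0 * outcomeDist P pol pr f k s a0 u) = 0 →
      (∑ k ∈ Finset.Icc 1 (n - 1), γ ^ k * outcomeDist P pol pr f k s a u) = 0 := by
    intro u h
    have hterm := (Finset.sum_eq_zero_iff_of_nonneg (fun k _ =>
      mul_nonneg (pow_nonneg hγ.1.le k) (Finset.sum_nonneg fun a0 _ =>
        mul_nonneg (hpoln' s a0)
          (od_nonneg P pol pr f hPn hpoln' hprn k s a0 u)))).mp h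
    refine Finset.sum_eq_zero fun k hk => ?_
    have h2 : ∑ a0 : A, pol s a0 * outcomeDist P pol pr f k s a0 u = 0 := by
      rcases mul_eq_zero.mp (hterm k hk) with h' | h'
      · exact absurd h' (pow_ne_zero k (ne_of_gt hγ.1))
      · exact h'
    have h3 := (Finset.sum_eq_zero_iff_of_nonneg (fun a0 _ =>
      mul_nonneg (hpoln' s a0)
        (od_nonneg P pol pr f hPn hpoln' hprn k s a0 u))).mp h2 a (Finset.mem_univ a)
    rcases mul_eq_zero.mp h3 with h' | h'
    · exact absurd h' (ne_of_gt (hpoln s a))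
    · rw [h', mul_zero]
  -- state analogue
  have hDS : ∀ s', (∑ a0 : A, pol s a0 * stateDist P pol n s a0 s') = 0 →
      stateDist P pol n s a s' = 0 := by
    intro s' h
    have h3 := (Finset.sum_eq_zero_iff_of_nonneg (fun a0 _ =>
      mul_nonneg (hpoln' s a0) (sd_nonneg P pol hPn hpoln' n s a0 s'))).mp h a
        (Finset.mem_univ a)
    rcases mul_eq_zero.mp h3 with h' | h'
    · exact absurd h' (ne_of_gt (hpoln s a))
    · exact h'
  -- swap helper for the state part
  have hswap : ∀ (W : S → ℝ),
      (∑ a0 : A, pol s a0 * ∑ s' : S, stateDist P pol n s a0 s' * W s')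
        = ∑ s' : S, (∑ a0 : A, pol s a0 * stateDist P pol n s a0 s') * W s' := by
    intro W
    calc ∑ a0 : A, pol s a0 * ∑ s' : S, stateDist P pol n s a0 s' * W s'
        = ∑ a0 : A, ∑ s' : S, pol s a0 * (stateDist P pol n s a0 s' * W s') :=
          Finset.sum_congr rfl fun a0 _ => Finset.mul_sum _ _ _
      _ = ∑ s' : S, ∑ a0 : A, pol s a0 * (stateDist P pol n s a0 s' * W s') :=
          Finset.sum_comm
      _ = ∑ s' : S, (∑ a0 : A, pol s a0 * stateDist P pol n s a0 s') * W s' := by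
          refine Finset.sum_congr rfl fun s' _ => ?_
          rw [Finset.sum_mul]
          exact Finset.sum_congr rfl fun a0 _ => (mul_assoc _ _ _).symm
  -- Claim B : the state part
  have hB : (∑ a0 : A, pol s a0 * ∑ s' : S,
        stateDist P pol n s a0 s' * (wS s' * Vval P pol pr ρ γ s'))
      = (∑ s' : S, stateDist P pol n s a s' * Vval P pol pr ρ γ s')
        - ∑ a0 : A, pol s a0 * ∑ s' : S,
            stateDist P pol n s a0 s' * Vval P pol pr ρ γ s' := by
    rw [hswap (fun s' => wS s' * Vval P pol pr ρ γ s'),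
      hswap (fun s' => Vval P pol pr ρ γ s'), ← Finset.sum_sub_distrib]
    refine Finset.sum_congr rfl fun s' _ => ?_
    rcases eq_or_ne (∑ a0 : A, pol s a0 * stateDist P pol n s a0 s') 0 with h | h
    · rw [h, hDS s' h]; ring
    · rw [hwS s']; field_simp
  -- Claim A : the outcome part
  have hA : (∑ a0 : A, pol s a0 * ∑ k ∈ Finset.Icc 1 (n - 1), γ ^ k *
        ∑ s' : S, ∑ a' : A, ∑ x : R,
          jointDist P pol k s a0 s' a' * pr s' a' x * (wU (f s' a' x) * ρ x))
      = (∑ k ∈ Finset.Icc 1 (n - 1), γ ^ k * gfun P pol pr ρ k s a)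
        - ∑ a0 : A, pol s a0 *
            ∑ k ∈ Finset.Icc 1 (n - 1), γ ^ k * gfun P pol pr ρ k s a0 := by
    have e1 : ∀ a0 k, (∑ s' : S, ∑ a' : A, ∑ x : R,
          jointDist P pol k s a0 s' a' * pr s' a' x * (wU (f s' a' x) * ρ x))
        = ∑ u ∈ T, wU u * (rU u * outcomeDist P pol pr f k s a0 u) :=
      fun a0 k => triple_eq P pol pr ρ f rU T hT hre wU k s a0
    have e2 : (∑ a0 : A, pol s a0 * ∑ k ∈ Finset.Icc 1 (n - 1), γ ^ k *
          ∑ u ∈ T, wU u * (rU u * outcomeDist P pol pr f k s a0 u))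
        = ∑ u ∈ T, wU u * (rU u * ∑ k ∈ Finset.Icc 1 (n - 1), γ ^ k *
            ∑ a0 : A, pol s a0 * outcomeDist P pol pr f k s a0 u) := by
      calc ∑ a0 : A, pol s a0 * ∑ k ∈ Finset.Icc 1 (n - 1), γ ^ k *
              ∑ u ∈ T, wU u * (rU u * outcomeDist P pol pr f k s a0 u)
          = ∑ a0 : A, ∑ k ∈ Finset.Icc 1 (n - 1), ∑ u ∈ T,
              pol s a0 * (γ ^ k * (wU u * (rU u * outcomeDist P pol pr f k s a0 u))) := by
            refine Finset.sum_congr rfl fun a0 _ => ?_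
            rw [Finset.mul_sum]
            refine Finset.sum_congr rfl fun k _ => ?_
            rw [Finset.mul_sum, Finset.mul_sum]
        _ = ∑ k ∈ Finset.Icc 1 (n - 1), ∑ a0 : A, ∑ u ∈ T,
              pol s a0 * (γ ^ k * (wU u * (rU u * outcomeDist P pol pr f k s a0 u))) :=
            Finset.sum_comm
        _ = ∑ k ∈ Finset.Icc 1 (n - 1), ∑ u ∈ T, ∑ a0 : A,
              pol s a0 * (γ ^ k * (wU u * (rU u * outcomeDist P pol pr f k s a0 u))) :=
            Finset.sum_congr rfl fun k _ => Finset.sum_comm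
        _ = ∑ u ∈ T, ∑ k ∈ Finset.Icc 1 (n - 1), ∑ a0 : A,
              pol s a0 * (γ ^ k * (wU u * (rU u * outcomeDist P pol pr f k s a0 u))) :=
            Finset.sum_comm
        _ = ∑ u ∈ T, wU u * (rU u * ∑ k ∈ Finset.Icc 1 (n - 1), γ ^ k *
              ∑ a0 : A, pol s a0 * outcomeDist P pol pr f k s a0 u) := by
            refine Finset.sum_congr rfl fun u _ => ?_
            calc ∑ k ∈ Finset.Icc 1 (n - 1), ∑ a0 : A,
                    pol s a0 * (γ ^ k * (wU u * (rU u * outcomeDist P pol pr f k s a0 u)))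
                = ∑ k ∈ Finset.Icc 1 (n - 1), wU u * (rU u * (γ ^ k *
                    ∑ a0 : A, pol s a0 * outcomeDist P pol pr f k s a0 u)) := by
                  refine Finset.sum_congr rfl fun k _ => ?_
                  trans (∑ a0 : A, wU u * (rU u * (γ ^ k *
                      (pol s a0 * outcomeDist P pol pr f k s a0 u))))
                  · exact Finset.sum_congr rfl fun a0 _ => by ring
                  · rw [← Finset.mul_sum, ← Finset.mul_sum, ← Finset.mul_sum]
              _ = wU u * (rU u * ∑ k ∈ Finset.Icc 1 (n - 1), γ ^ k *
                    ∑ a0 : A, pol s a0 * outcomeDist P pol pr f k s a0 u) := by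
                  rw [← Finset.mul_sum, ← Finset.mul_sum]
    have e3 : (∑ u ∈ T, wU u * (rU u * ∑ k ∈ Finset.Icc 1 (n - 1), γ ^ k *
          ∑ a0 : A, pol s a0 * outcomeDist P pol pr f k s a0 u))
        = ∑ u ∈ T, rU u *
            ((∑ k ∈ Finset.Icc 1 (n - 1), γ ^ k * outcomeDist P pol pr f k s a u)
              - ∑ k ∈ Finset.Icc 1 (n - 1), γ ^ k *
                  ∑ a0 : A, pol s a0 * outcomeDist P pol pr f k s a0 u) := by
      refine Finset.sum_congr rfl fun u _ => ?_
      rcases eq_or_ne (∑ k ∈ Finset.Icc 1 (n - 1), γ ^ k *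
          ∑ a0 : A, pol s a0 * outcomeDist P pol pr f k s a0 u) 0 with h | h
      · rw [h, hDN u h]; ring
      · rw [hwU u]; field_simp
    have e5 : (∑ u ∈ T, rU u *
          ∑ k ∈ Finset.Icc 1 (n - 1), γ ^ k * outcomeDist P pol pr f k s a u)
        = ∑ k ∈ Finset.Icc 1 (n - 1), γ ^ k * gfun P pol pr ρ k s a := by
      calc ∑ u ∈ T, rU u *
              ∑ k ∈ Finset.Icc 1 (n - 1), γ ^ k * outcomeDist P pol pr f k s a u
          = ∑ u ∈ T, ∑ k ∈ Finset.Icc 1 (n - 1),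
              rU u * (γ ^ k * outcomeDist P pol pr f k s a u) :=
            Finset.sum_congr rfl fun u _ => Finset.mul_sum _ _ _
        _ = ∑ k ∈ Finset.Icc 1 (n - 1), ∑ u ∈ T,
              rU u * (γ ^ k * outcomeDist P pol pr f k s a u) := Finset.sum_comm
        _ = ∑ k ∈ Finset.Icc 1 (n - 1), γ ^ k *
              ∑ u ∈ T, rU u * outcomeDist P pol pr f k s a u := by
            refine Finset.sum_congr rfl fun k _ => ?_
            rw [Finset.mul_sum]
            exact Finset.sum_congr rfl fun u _ => by ring
        _ = ∑ k ∈ Finset.Icc 1 (n - 1), γ ^ k * gfun P pol pr ρ k s a :=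
            Finset.sum_congr rfl fun k _ => by
              rw [sum_rU_od P pol pr ρ f rU T hT hre k s a]
    have e6 : (∑ u ∈ T, rU u * ∑ k ∈ Finset.Icc 1 (n - 1), γ ^ k *
          ∑ a0 : A, pol s a0 * outcomeDist P pol pr f k s a0 u)
        = ∑ a0 : A, pol s a0 *
            ∑ k ∈ Finset.Icc 1 (n - 1), γ ^ k * gfun P pol pr ρ k s a0 := by
      calc ∑ u ∈ T, rU u * ∑ k ∈ Finset.Icc 1 (n - 1), γ ^ k *
              ∑ a0 : A, pol s a0 * outcomeDist P pol pr f k s a0 u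
          = ∑ u ∈ T, ∑ k ∈ Finset.Icc 1 (n - 1), ∑ a0 : A,
              rU u * (γ ^ k * (pol s a0 * outcomeDist P pol pr f k s a0 u)) := by
            refine Finset.sum_congr rfl fun u _ => ?_
            rw [Finset.mul_sum]
            refine Finset.sum_congr rfl fun k _ => ?_
            rw [Finset.mul_sum, Finset.mul_sum]
        _ = ∑ k ∈ Finset.Icc 1 (n - 1), ∑ u ∈ T, ∑ a0 : A,
              rU u * (γ ^ k * (pol s a0 * outcomeDist P pol pr f k s a0 u)) :=
            Finset.sum_comm
        _ = ∑ k ∈ Finset.Icc 1 (n - 1), ∑ a0 : A, ∑ u ∈ T,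
              rU u * (γ ^ k * (pol s a0 * outcomeDist P pol pr f k s a0 u)) :=
            Finset.sum_congr rfl fun k _ => Finset.sum_comm
        _ = ∑ a0 : A, ∑ k ∈ Finset.Icc 1 (n - 1), ∑ u ∈ T,
              rU u * (γ ^ k * (pol s a0 * outcomeDist P pol pr f k s a0 u)) :=
            Finset.sum_comm
        _ = ∑ a0 : A, pol s a0 *
              ∑ k ∈ Finset.Icc 1 (n - 1), γ ^ k * gfun P pol pr ρ k s a0 := by
            refine Finset.sum_congr rfl fun a0 _ => ?_
            rw [Finset.mul_sum]
            refine Finset.sum_congr rfl fun k _ => ?_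
            calc ∑ u ∈ T, rU u * (γ ^ k * (pol s a0 * outcomeDist P pol pr f k s a0 u))
                = ∑ u ∈ T, pol s a0 * (γ ^ k *
                    (rU u * outcomeDist P pol pr f k s a0 u)) :=
                  Finset.sum_congr rfl fun u _ => by ring
              _ = pol s a0 * (γ ^ k *
                    ∑ u ∈ T, rU u * outcomeDist P pol pr f k s a0 u) := by
                  rw [← Finset.mul_sum, ← Finset.mul_sum]
              _ = pol s a0 * (γ ^ k * gfun P pol pr ρ k s a0) := by
                  rw [sum_rU_od P pol pr ρ f rU T hT hre k s a0]
    calc (∑ a0 : A, pol s a0 * ∑ k ∈ Finset.Icc 1 (n - 1), γ ^ k *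
            ∑ s' : S, ∑ a' : A, ∑ x : R,
              jointDist P pol k s a0 s' a' * pr s' a' x * (wU (f s' a' x) * ρ x))
        = ∑ a0 : A, pol s a0 * ∑ k ∈ Finset.Icc 1 (n - 1), γ ^ k *
            ∑ u ∈ T, wU u * (rU u * outcomeDist P pol pr f k s a0 u) := by
          refine Finset.sum_congr rfl fun a0 _ => ?_
          rw [Finset.mul_sum, Finset.mul_sum]
          refine Finset.sum_congr rfl fun k _ => ?_
          rw [e1 a0 k]
      _ = ∑ u ∈ T, rU u *
            ((∑ k ∈ Finset.Icc 1 (n - 1), γ ^ k * outcomeDist P pol pr f k s a u)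
              - ∑ k ∈ Finset.Icc 1 (n - 1), γ ^ k *
                  ∑ a0 : A, pol s a0 * outcomeDist P pol pr f k s a0 u) := by
          rw [e2, e3]
      _ = (∑ u ∈ T, rU u *
            ∑ k ∈ Finset.Icc 1 (n - 1), γ ^ k * outcomeDist P pol pr f k s a u)
          - ∑ u ∈ T, rU u * ∑ k ∈ Finset.Icc 1 (n - 1), γ ^ k *
              ∑ a0 : A, pol s a0 * outcomeDist P pol pr f k s a0 u := by
          rw [← Finset.sum_sub_distrib]
          exact Finset.sum_congr rfl fun u _ => by ring
      _ = _ := by rw [e5, e6]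
  -- range split
  have hrange : ∀ a0 : A, (∑ k ∈ Finset.range n, γ ^ k * gfun P pol pr ρ k s a0)
      = rexp pr ρ s a0
        + ∑ k ∈ Finset.Icc 1 (n - 1), γ ^ k * gfun P pol pr ρ k s a0 := by
    intro a0
    have hr : Finset.range n = insert 0 (Finset.Icc 1 (n - 1)) := by
      ext k
      simp only [Finset.mem_range, Finset.mem_insert, Finset.mem_Icc]
      omega
    rw [hr, Finset.sum_insert (by simp)]
    rw [pow_zero, one_mul, gfun_zero]
  have hQ : ∀ a0 : A, Qval P pol pr ρ γ s a0
      = rexp pr ρ s a0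
        + (∑ k ∈ Finset.Icc 1 (n - 1), γ ^ k * gfun P pol pr ρ k s a0)
        + γ ^ n * ∑ s' : S, stateDist P pol n s a0 s' * Vval P pol pr ρ γ s' := by
    intro a0
    rw [Qval_split_V P pol pr ρ hγ hPn hPs hpoln' hpols n (by omega) s a0, hrange a0]
  have hV : Vval P pol pr ρ γ s
      = (∑ a0 : A, pol s a0 * rexp pr ρ s a0)
        + (∑ a0 : A, pol s a0 *
            ∑ k ∈ Finset.Icc 1 (n - 1), γ ^ k * gfun P pol pr ρ k s a0)
        + γ ^ n * ∑ a0 : A, pol s a0 *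
            ∑ s' : S, stateDist P pol n s a0 s' * Vval P pol pr ρ γ s' := by
    rw [show Vval P pol pr ρ γ s = ∑ a0 : A, pol s a0 * Qval P pol pr ρ γ s a0 from rfl]
    simp only [hQ]
    simp only [mul_add]
    rw [Finset.sum_add_distrib, Finset.sum_add_distrib]
    congr 1
    rw [Finset.mul_sum]
    exact Finset.sum_congr rfl fun a0 _ => by ring
  have hRHS : (∑ a0 : A, pol s a0 *
        ((∑ k ∈ Finset.Icc 1 (n - 1), γ ^ k *
            ∑ s' : S, ∑ a' : A, ∑ x : R,
              jointDist P pol k s a0 s' a' * pr s' a' x * (wU (f s' a' x) * ρ x))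
          + γ ^ n * ∑ s' : S,
              stateDist P pol n s a0 s' * (wS s' * Vval P pol pr ρ γ s')))
      = ((∑ k ∈ Finset.Icc 1 (n - 1), γ ^ k * gfun P pol pr ρ k s a)
          - ∑ a0 : A, pol s a0 *
              ∑ k ∈ Finset.Icc 1 (n - 1), γ ^ k * gfun P pol pr ρ k s a0)
        + γ ^ n * ((∑ s' : S, stateDist P pol n s a s' * Vval P pol pr ρ γ s')
            - ∑ a0 : A, pol s a0 * ∑ s' : S,
                stateDist P pol n s a0 s' * Vval P pol pr ρ γ s') := by
    calc (∑ a0 : A, pol s a0 *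
          ((∑ k ∈ Finset.Icc 1 (n - 1), γ ^ k *
              ∑ s' : S, ∑ a' : A, ∑ x : R,
                jointDist P pol k s a0 s' a' * pr s' a' x * (wU (f s' a' x) * ρ x))
            + γ ^ n * ∑ s' : S,
                stateDist P pol n s a0 s' * (wS s' * Vval P pol pr ρ γ s')))
        = (∑ a0 : A, pol s a0 *
            ∑ k ∈ Finset.Icc 1 (n - 1), γ ^ k *
              ∑ s' : S, ∑ a' : A, ∑ x : R,
                jointDist P pol k s a0 s' a' * pr s' a' x * (wU (f s' a' x) * ρ x))
          + γ ^ n * ∑ a0 : A, pol s a0 * ∑ s' : S,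
              stateDist P pol n s a0 s' * (wS s' * Vval P pol pr ρ γ s') := by
          simp only [mul_add]
          rw [Finset.sum_add_distrib]
          congr 1
          rw [Finset.mul_sum]
          exact Finset.sum_congr rfl fun a0 _ => by ring
      _ = _ := by rw [hA, hB]
  rw [hQ a, hV, hRHS]
  ring

end main

/-- n-step bootstrapped hindsight advantage decomposition. With
`w_{n,γ}(s,a,u)` the discounted (steps `1..n-1`) contribution coefficient on rewarding
outcomes and `w_n(s,a,s')` the `n`-step state contribution coefficient,
`A^π(s,a) = r(s,a) - ∑_{a'} π(a'|s) r(s,a')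
  + E_{τ(s,π)}[∑_{k=1}^{n-1} γ^k w_{n,γ}(s,a,U_k) R_k + γ^n w_n(s,a,S_n) V^π(S_n)]`. -/
theorem nstep_cocoa_advantage
    {υ : Type*} [Fintype S] [Fintype A] [Fintype R]
    (P : S → A → S → ℝ) (pol : S → A → ℝ) (pr : S → A → R → ℝ) (ρ : R → ℝ)
    (f : S → A → R → υ) (rU : υ → ℝ)
    (γ : ℝ) (hγ : γ ∈ Set.Ioo (0 : ℝ) 1) (n : ℕ) (hn : 2 ≤ n)
    (hPn : ∀ s a s', 0 ≤ P s a s') (hPs : ∀ s a, ∑ s', P s a s' = 1)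
    (hprn : ∀ s a x, 0 ≤ pr s a x) (hprs : ∀ s a, ∑ x, pr s a x = 1)
    (hpoln : ∀ s a, 0 < pol s a) (hpols : ∀ s, ∑ a, pol s a = 1)
    -- `U = f(S, A, R)` is fully predictive of the reward: `E[R | S, A, U = u] = rU u`.
    (hfp : ∀ (s : S) (a : A) (u : υ),
      0 < ∑ x ∈ Finset.univ.filter (fun x => f s a x = u), pr s a x →
      (∑ x ∈ Finset.univ.filter (fun x => f s a x = u), pr s a x * ρ x)
        = rU u * ∑ x ∈ Finset.univ.filter (fun x => f s a x = u), pr s a x)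
    (s : S) (a : A) :
    letI wU : υ → ℝ := fun u =>
      (∑ k ∈ Finset.Icc 1 (n - 1), γ ^ k * outcomeDist P pol pr f k s a u)
        / (∑ k ∈ Finset.Icc 1 (n - 1), γ ^ k *
            ∑ a0 : A, pol s a0 * outcomeDist P pol pr f k s a0 u) - 1
    letI wS : S → ℝ := fun s' =>
      stateDist P pol n s a s'
        / (∑ a0 : A, pol s a0 * stateDist P pol n s a0 s') - 1
    Qval P pol pr ρ γ s a - Vval P pol pr ρ γ s
      = rexp pr ρ s a - (∑ a' : A, pol s a' * rexp pr ρ s a')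
        + ∑ a0 : A, pol s a0 *
            ((∑ k ∈ Finset.Icc 1 (n - 1), γ ^ k *
                ∑ s' : S, ∑ a' : A, ∑ x : R,
                  jointDist P pol k s a0 s' a' * pr s' a' x * (wU (f s' a' x) * ρ x))
              + γ ^ n * ∑ s' : S,
                  stateDist P pol n s a0 s' * (wS s' * Vval P pol pr ρ γ s')) :=
  main_aux P pol pr ρ f rU γ hγ n hn hPn hPs hprn hpoln hpols hfp s a
    (fun u =>
      (∑ k ∈ Finset.Icc 1 (n - 1), γ ^ k * outcomeDist P pol pr f k s a u)
        / (∑ k ∈ Finset.Icc 1 (n - 1), γ ^ k *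
            ∑ a0 : A, pol s a0 * outcomeDist P pol pr f k s a0 u) - 1)
    (fun s' => stateDist P pol n s a s'
        / (∑ a0 : A, pol s a0 * stateDist P pol n s a0 s') - 1)
    (fun _ => rfl) (fun _ => rfl)

end
end
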